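/- arXiv:2012.14479 — 14 statements merged into one kernel-verified Lean document; each statement's English description precedes it below -/
import Mathlib

section
/- A paratopological group G (satisfying the T0 separation axiom) is projectively Ψ if and only if there exist an index type ι, a family (Y_i)_{i∈ι} of Hausdorff paratopological groups each of countable pseudocharacter, and an injective group homomorphism p from G into the product group ∏_{i∈ι} Y_i (with the product topology) that is a topological embedding (i.e., a homeomorphism of G onto its image). -/
/-- A paratopological group (group with jointly continuous multiplication) has
*countable pseudocharacter* if the singleton of its identity is the intersection of
a countable family of open sets. -/
def HasCountablePseudocharacter (H : Type*) [TopologicalSpace H] [One H] : Prop :=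
  ∃ S : Set (Set H), S.Countable ∧ (∀ V ∈ S, IsOpen V) ∧ ⋂₀ S = ({1} : Set H)

/-- Auxiliary predicate: `H` (with the given group and topology structures) is a
Hausdorff paratopological group of countable pseudocharacter and there is a continuous
homomorphism `h : G → H` with `h ⁻¹' {1} ⊆ U`. -/
def IsPsiWitness {G : Type u} [Group G] [TopologicalSpace G] (U : Set G)
    (H : Type u) [Group H] [TopologicalSpace H] : Prop :=
  ContinuousMul H ∧ T2Space H ∧ HasCountablePseudocharacter H ∧
    ∃ h : G →* H, Continuous h ∧ h ⁻¹' ({1} : Set H) ⊆ U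

/-- A paratopological group `G` is *projectively Ψ* if for every neighborhood `U` of the
identity there are a Hausdorff paratopological group `H` of countable pseudocharacter and
a continuous homomorphism `h : G → H` with `h ⁻¹' {1} ⊆ U`. -/
def ProjectivelyPsi (G : Type u) [Group G] [TopologicalSpace G] : Prop :=
  ∀ U ∈ nhds (1 : G), ∃ (H : Type u) (iG : Group H) (iT : TopologicalSpace H),
    @IsPsiWitness G _ _ U H iG iT

/-- Auxiliary predicate: the family `Y i` consists of Hausdorff paratopological groups of
countable pseudocharacter and there is an injective group homomorphism from `G` into the
product `∀ i, Y i` (with the product topology) which is a topological embedding. -/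
def EmbedsInProductOfHausdorffCtblPsChar (G : Type u) [Group G] [TopologicalSpace G]
    (ι : Type u) (Y : ι → Type u) [∀ i, Group (Y i)] [∀ i, TopologicalSpace (Y i)] : Prop :=
  (∀ i, ContinuousMul (Y i)) ∧ (∀ i, T2Space (Y i)) ∧
    (∀ i, HasCountablePseudocharacter (Y i)) ∧
    ∃ p : G →* (∀ i, Y i), Function.Injective p ∧ Topology.IsEmbedding p

open Topology Filter Set

/-- A bundled "strong" witness: a Hausdorff paratopological group of countable
pseudocharacter together with a continuous homomorphism `hom` and an *open* neighborhood
`V` of the identity with `hom ⁻¹' V ⊆ U`. -/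
structure StrongWitness (G : Type u) [Group G] [TopologicalSpace G] (U : Set G) :
    Type (u + 1) where
  H : Type u
  [grp : Group H]
  [top : TopologicalSpace H]
  cm : ContinuousMul H
  t2 : T2Space H
  cps : HasCountablePseudocharacter H
  hom : G →* H
  cont : Continuous hom
  V : Set H
  openV : IsOpen V
  memV : (1 : H) ∈ V
  subV : hom ⁻¹' V ⊆ U

/-- Countable products preserve countable pseudocharacter. -/
lemma hasCountablePseudocharacter_pi {ι : Type*} [Countable ι] {Y : ι → Type*}
    [∀ i, TopologicalSpace (Y i)] [∀ i, One (Y i)]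
    (h : ∀ i, HasCountablePseudocharacter (Y i)) :
    HasCountablePseudocharacter (∀ i, Y i) := by
  choose S Sc So Si using h
  refine ⟨⋃ i, (fun V => (fun f : ∀ i, Y i => f i) ⁻¹' V) '' S i,
    countable_iUnion fun i => (Sc i).image _, ?_, ?_⟩
  · rintro V hV
    simp only [mem_iUnion, mem_image] at hV
    obtain ⟨i, W, hW, rfl⟩ := hV
    exact (So i W hW).preimage (continuous_apply i)
  · ext f
    simp only [mem_sInter, mem_iUnion, mem_image, mem_singleton_iff]
    constructor
    · intro hf
      funext i
      have : f i ∈ ⋂₀ S i := by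
        intro W hW
        exact hf _ ⟨i, W, hW, rfl⟩
      rw [Si i] at this
      exact this
    · rintro rfl V ⟨i, W, hW, rfl⟩
      have : (1 : Y i) ∈ ⋂₀ S i := by rw [Si i]; rfl
      exact this W hW

/-- From projective Ψ-ness, we get strong witnesses (with an open set instead of just
the kernel), by passing to the quotient by the kernel with the quotient topology. -/
lemma exists_strongWitness {G : Type u} [Group G] [TopologicalSpace G] [ContinuousMul G]
    (hG : ProjectivelyPsi G) {U : Set G} (hU : U ∈ nhds 1) :
    Nonempty (StrongWitness G U) := by
  obtain ⟨U₁, hU₁o, hU₁1, hU₁sq⟩ := exists_open_nhds_one_mul_subset hU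
  obtain ⟨H, iG, iT, cm, t2, cps, h, hcont, hker⟩ := hG U₁ (hU₁o.mem_nhds hU₁1)
  letI := iG; letI := iT; haveI := cm; haveI := t2
  set N := h.ker with hN
  haveI cmQ : ContinuousMul (G ⧸ N) := ⟨by
    rw [← (QuotientGroup.isOpenQuotientMap_mk.prodMap
      QuotientGroup.isOpenQuotientMap_mk).continuous_comp_iff]
    exact QuotientGroup.continuous_mk.comp continuous_mul⟩
  have hl : (QuotientGroup.kerLift h) ∘ (QuotientGroup.mk : G → G ⧸ N) = h :=
    funext fun g => QuotientGroup.kerLift_mk h g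
  have hlcont : Continuous (QuotientGroup.kerLift h) := by
    rw [(QuotientGroup.isQuotientMap_mk N).continuous_iff, hl]
    exact hcont
  have hlinj := QuotientGroup.kerLift_injective h
  haveI t2Q : T2Space (G ⧸ N) := T2Space.of_injective_continuous hlinj hlcont
  have cpsQ : HasCountablePseudocharacter (G ⧸ N) := by
    obtain ⟨S, Sc, So, Si⟩ := cps
    refine ⟨(fun V => (QuotientGroup.kerLift h) ⁻¹' V) '' S, Sc.image _, ?_, ?_⟩
    · rintro V ⟨W, hW, rfl⟩
      exact (So W hW).preimage hlcont
    · ext x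
      simp only [sInter_image, mem_iInter, mem_singleton_iff]
      constructor
      · intro hx
        have : QuotientGroup.kerLift h x ∈ ⋂₀ S := fun W hW => hx W hW
        rw [Si, mem_singleton_iff] at this
        rw [← map_one (QuotientGroup.kerLift h)] at this
        exact hlinj this
      · rintro rfl W hW
        have : (1 : H) ∈ ⋂₀ S := by rw [Si]; rfl
        simpa using this W hW
  refine ⟨⟨G ⧸ N, cmQ, t2Q, cpsQ, QuotientGroup.mk' N, QuotientGroup.continuous_mk,
    (QuotientGroup.mk : G → G ⧸ N) '' U₁, QuotientGroup.isOpenMap_coe U₁ hU₁o,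
    ⟨1, hU₁1, rfl⟩, ?_⟩⟩
  intro x hx
  obtain ⟨u, hu, hux⟩ := hx
  have hmem : u⁻¹ * x ∈ N := (QuotientGroup.eq).mp hux
  have hx' : u⁻¹ * x ∈ U₁ := by
    refine hker ?_
    simp only [Set.mem_preimage, Set.mem_singleton_iff]
    exact MonoidHom.mem_ker.mp hmem
  have : u * (u⁻¹ * x) ∈ U := hU₁sq (Set.mul_mem_mul hu hx')
  simpa using this

/-- A paratopological group `G` (satisfying the `T₀` separation axiom) is projectively Ψ
if and only if `G` embeds, via an injective continuous group homomorphism that is a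
topological embedding, into a product of Hausdorff paratopological groups of countable
pseudocharacter. -/
theorem projectivelyPsi_iff_embeds_in_product (G : Type u) [Group G] [TopologicalSpace G]
    [ContinuousMul G] [T0Space G] :
    ProjectivelyPsi G ↔
      ∃ (ι : Type u) (Y : ι → Type u) (iG : ∀ i, Group (Y i))
        (iT : ∀ i, TopologicalSpace (Y i)),
        @EmbedsInProductOfHausdorffCtblPsChar G _ _ ι Y iG iT := by
  constructor
  · intro hG
    classical
    set ι : Type u := {U : Set G // U ∈ nhds 1} with hι
    let w : ∀ i : ι, StrongWitness G i.1 := fun i =>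
      Classical.choice (exists_strongWitness hG i.2)
    letI Y : ι → Type u := fun i => (w i).H
    letI iG : ∀ i, Group (Y i) := fun i => (w i).grp
    letI iT : ∀ i, TopologicalSpace (Y i) := fun i => (w i).top
    refine ⟨ι, Y, iG, iT, fun i => (w i).cm, fun i => (w i).t2, fun i => (w i).cps, ?_⟩
    haveI : ∀ i, ContinuousMul (Y i) := fun i => (w i).cm
    let p : G →* ∀ i, Y i := Pi.monoidHom fun i => (w i).hom
    have pcont : Continuous p := continuous_pi fun i => (w i).cont
    -- every element of the kernel of `p` lies in every neighborhood of 1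
    have hker : ∀ g : G, p g = 1 → ∀ U ∈ nhds (1 : G), g ∈ U := by
      intro g hg U hU
      have : (w ⟨U, hU⟩).hom g = 1 := congrFun hg ⟨U, hU⟩
      exact (w ⟨U, hU⟩).subV (by rw [Set.mem_preimage, this]; exact (w ⟨U, hU⟩).memV)
    have pinj : Function.Injective p := by
      rw [injective_iff_map_eq_one]
      intro g hg
      have hg' : p g⁻¹ = 1 := by rw [map_inv, hg, inv_one]
      have h1 : g ⤳ (1 : G) :=
        specializes_iff_pure.mpr fun U hU => hker g hg U hU
      have h2 : g⁻¹ ⤳ (1 : G) :=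
        specializes_iff_pure.mpr fun U hU => hker g⁻¹ hg' U hU
      have h3 : (1 : G) ⤳ g := by
        have := h2.map (continuous_mul_left g)
        simpa using this
      exact (h1.antisymm h3).eq
    refine ⟨p, pinj, ?_⟩
    refine ⟨Topology.isInducing_iff_nhds.mpr fun x => le_antisymm
      (pcont.tendsto x).le_comap ?_, pinj⟩
    intro U hU
    rw [Filter.mem_comap]
    have hU' : (fun y => x * y) ⁻¹' U ∈ nhds (1 : G) :=
      (continuous_mul_left x).continuousAt.preimage_mem_nhds (by simpa using hU)
    set i : ι := ⟨(fun y => x * y) ⁻¹' U, hU'⟩ with hi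
    haveI : ContinuousMul (Y i) := (w i).cm
    refine ⟨(fun f : ∀ j, Y j => f i) ⁻¹' ((fun z => (w i).hom x * z) '' (w i).V),
      (continuous_apply i).continuousAt.preimage_mem_nhds ?_, ?_⟩
    · refine (isOpenMap_mul_left ((w i).hom x) _ (w i).openV).mem_nhds ?_
      exact ⟨1, (w i).memV, by simp only [mul_one]; rfl⟩
    · intro g hg
      obtain ⟨v, hv, hveq⟩ := hg
      have hgv : (w i).hom (x⁻¹ * g) ∈ (w i).V := by
        have heq : (w i).hom g = (w i).hom x * v := hveq.symm
        rw [map_mul, map_inv, heq, ← mul_assoc, inv_mul_cancel, one_mul]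
        exact hv
      have hmem : x⁻¹ * g ∈ (fun y => x * y) ⁻¹' U := (w i).subV hgv
      simpa using hmem
  · rintro ⟨ι, Y, iG, iT, cm, t2, cps, p, pinj, pemb⟩ U hU
    letI := iG; letI := iT
    haveI : ∀ i, ContinuousMul (Y i) := cm
    haveI : ∀ i, T2Space (Y i) := t2
    have h1 : nhds (1 : G) = Filter.comap p (nhds (p 1)) := pemb.isInducing.nhds_eq_comap 1
    rw [map_one] at h1
    obtain ⟨T, hT, hTsub⟩ := Filter.mem_comap.mp (h1 ▸ hU)
    rw [nhds_pi] at hT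
    obtain ⟨I, hIfin, t, ht, hts⟩ := Filter.mem_pi.mp hT
    haveI := hIfin.to_subtype
    refine ⟨∀ i : I, Y i, inferInstance, inferInstance, inferInstance, inferInstance,
      hasCountablePseudocharacter_pi fun i => cps i, ?_⟩
    refine ⟨(Pi.monoidHom fun i : I => Pi.evalMonoidHom Y (i : ι)).comp p,
      continuous_pi fun i => (continuous_apply (i : ι)).comp pemb.continuous, ?_⟩
    intro g hg
    simp only [Set.mem_preimage, Set.mem_singleton_iff] at hg
    apply hTsub
    apply hts
    intro i hi
    have : p g i = 1 := congrFun hg ⟨i, hi⟩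
    rw [this]
    exact mem_of_mem_nhds (ht i)
end

section
/- Let G be a paratopological group, H a Hausdorff paratopological group of countable pseudocharacter, and h : G → H a continuous group homomorphism with kernel N. Then the quotient group G/N, endowed with the quotient topology, is a Hausdorff paratopological group of countable pseudocharacter, and the induced homomorphism j : G/N → H with h = j ∘ p (p the quotient map) is continuous and injective. -/
/-- Let `G` be a paratopological group, `H` a Hausdorff paratopological group of countable
pseudocharacter and `h : G → H` a continuous homomorphism with kernel `N`.  Then the
quotient group `G ⧸ N`, endowed with the quotient topology, is a Hausdorff
paratopological group of countable pseudocharacter and the induced homomorphism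
`j : G ⧸ N → H` (satisfying `h = j ∘ p` for the quotient map `p`) is continuous and
injective. -/
theorem quotient_by_ker_hausdorff_ctblPseudocharacter {G H : Type*}
    [Group G] [TopologicalSpace G] [ContinuousMul G]
    [Group H] [TopologicalSpace H] [ContinuousMul H] [T2Space H]
    (hH : HasCountablePseudocharacter H) (h : G →* H) (hc : Continuous h) :
    ContinuousMul (G ⧸ h.ker) ∧ T2Space (G ⧸ h.ker) ∧
      HasCountablePseudocharacter (G ⧸ h.ker) ∧
      Continuous (QuotientGroup.kerLift h) ∧ Function.Injective (QuotientGroup.kerLift h) ∧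
      ∀ x : G, QuotientGroup.kerLift h (QuotientGroup.mk x) = h x := by
  have hmul : ContinuousMul (G ⧸ h.ker) := by
    constructor
    rw [← (QuotientGroup.isOpenQuotientMap_mk.prodMap
      QuotientGroup.isOpenQuotientMap_mk).continuous_comp_iff]
    exact QuotientGroup.continuous_mk.comp continuous_mul
  have hlift : Continuous (QuotientGroup.kerLift h) := by
    rw [(QuotientGroup.isQuotientMap_mk h.ker).continuous_iff]
    exact hc
  have hinj : Function.Injective (QuotientGroup.kerLift h) :=
    QuotientGroup.kerLift_injective h
  have ht2 : T2Space (G ⧸ h.ker) := T2Space.of_injective_continuous hinj hlift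
  refine ⟨hmul, ht2, ?_, hlift, hinj, fun x => rfl⟩
  obtain ⟨S, hSc, hSo, hS1⟩ := hH
  refine ⟨(fun V => QuotientGroup.kerLift h ⁻¹' V) '' S, hSc.image _,
    fun V hV => ?_, ?_⟩
  · obtain ⟨W, hW, rfl⟩ := hV
    exact (hSo W hW).preimage hlift
  · rw [Set.sInter_image]
    have : ⋂ V ∈ S, QuotientGroup.kerLift h ⁻¹' V = QuotientGroup.kerLift h ⁻¹' ⋂₀ S := by
      simp [Set.preimage_sInter]
    rw [this, hS1]
    ext x
    simp only [Set.mem_preimage, Set.mem_singleton_iff]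
    constructor
    · intro hx
      exact hinj (by simpa using hx)
    · rintro rfl; simp
end

section
/- Every ω-balanced paratopological group G whose Hausdorff number is at most ω is projectively Ψ; that is, for every neighborhood U of the identity e of G there exist a Hausdorff paratopological group H of countable pseudocharacter and a continuous homomorphism h : G → H with h⁻¹({e_H}) ⊆ U. -/
open Pointwise Topology

/-- A paratopological group `G` is *ω-balanced* if for every neighborhood `U` of the
identity there is a countable family `𝒱` of neighborhoods of the identity such that for
every `x ∈ G` some `V ∈ 𝒱` satisfies `x V x⁻¹ ⊆ U`. -/
def OmegaBalanced (G : Type*) [Group G] [TopologicalSpace G] : Prop :=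
  ∀ U ∈ nhds (1 : G), ∃ 𝒱 : Set (Set G), 𝒱.Countable ∧ (∀ V ∈ 𝒱, V ∈ nhds (1 : G)) ∧
    ∀ x : G, ∃ V ∈ 𝒱, ∀ v ∈ V, x * v * x⁻¹ ∈ U

/-- A paratopological group `G` has *Hausdorff number at most ω* if for every neighborhood
`U` of the identity there is a countable family `(Vₙ)` of neighborhoods of the identity
with `⋂ₙ Vₙ Vₙ⁻¹ ⊆ U`. -/
def HausdorffNumberLeOmega (G : Type*) [Group G] [TopologicalSpace G] : Prop :=
  ∀ U ∈ nhds (1 : G), ∃ V : ℕ → Set G, (∀ n, V n ∈ nhds (1 : G)) ∧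
    (⋂ n, V n * (V n)⁻¹) ⊆ U

namespace ProjPsi


variable {G : Type*} [Group G]

/-- A family of subsets of a group suitable to serve as a neighborhood base at `1` of a
paratopological group topology. -/
structure IsNbhdFam (𝒰 : Set (Set G)) : Prop where
  one_mem : ∀ V ∈ 𝒰, (1 : G) ∈ V
  inter : ∀ V ∈ 𝒰, ∀ W ∈ 𝒰, V ∩ W ∈ 𝒰
  sq : ∀ V ∈ 𝒰, ∃ W ∈ 𝒰, ∀ a ∈ W, ∀ b ∈ W, a * b ∈ V
  conj : ∀ V ∈ 𝒰, ∀ x : G, ∃ W ∈ 𝒰, ∀ w ∈ W, x * w * x⁻¹ ∈ V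

/-- The topology on `G` whose open sets are those `O` such that every point `x ∈ O`
has `x * V ⊆ O` for some `V ∈ 𝒰`. -/
def famTop (𝒰 : Set (Set G)) (hne : 𝒰.Nonempty)
    (hinter : ∀ V ∈ 𝒰, ∀ W ∈ 𝒰, V ∩ W ∈ 𝒰) : TopologicalSpace G where
  IsOpen O := ∀ x ∈ O, ∃ V ∈ 𝒰, ∀ v ∈ V, x * v ∈ O
  isOpen_univ := fun _ _ => ⟨hne.choose, hne.choose_spec, fun _ _ => trivial⟩
  isOpen_inter := fun O₁ O₂ h₁ h₂ x hx => by
    obtain ⟨V₁, hV₁, hs1⟩ := h₁ x hx.1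
    obtain ⟨V₂, hV₂, hs2⟩ := h₂ x hx.2
    exact ⟨V₁ ∩ V₂, hinter _ hV₁ _ hV₂, fun v hv => ⟨hs1 v hv.1, hs2 v hv.2⟩⟩
  isOpen_sUnion := fun S hS x hx => by
    obtain ⟨O, hO, hxO⟩ := hx
    obtain ⟨V, hV, h⟩ := hS O hO x hxO
    exact ⟨V, hV, fun v hv => Set.mem_sUnion.2 ⟨O, hO, h v hv⟩⟩

theorem famTop_isOpen_iff {𝒰 : Set (Set G)} {hne : 𝒰.Nonempty}
    {hinter : ∀ V ∈ 𝒰, ∀ W ∈ 𝒰, V ∩ W ∈ 𝒰} {O : Set G} :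
    IsOpen[famTop 𝒰 hne hinter] O ↔ ∀ x ∈ O, ∃ V ∈ 𝒰, ∀ v ∈ V, x * v ∈ O :=
  Iff.rfl

theorem mem_nhds_famTop {𝒰 : Set (Set G)} {hne : 𝒰.Nonempty} (hF : IsNbhdFam 𝒰)
    (x : G) (S : Set G) :
    S ∈ @nhds G (famTop 𝒰 hne hF.inter) x ↔ ∃ V ∈ 𝒰, ∀ v ∈ V, x * v ∈ S := by
  letI t := famTop 𝒰 hne hF.inter
  constructor
  · intro hS
    obtain ⟨O, hOS, hO, hxO⟩ := mem_nhds_iff.1 hS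
    obtain ⟨V, hV, h⟩ := hO x hxO
    exact ⟨V, hV, fun v hv => hOS (h v hv)⟩
  · rintro ⟨V, hV, h⟩
    refine mem_nhds_iff.2 ⟨{y | ∃ W ∈ 𝒰, ∀ w ∈ W, y * w ∈ S}, ?_, ?_, ⟨V, hV, h⟩⟩
    · rintro y ⟨W, hW, hyW⟩
      simpa using hyW 1 (hF.one_mem W hW)
    · rintro y ⟨W, hW, hyW⟩
      obtain ⟨W', hW', hsplit⟩ := hF.sq W hW
      refine ⟨W', hW', fun v hv => ⟨W', hW', fun w hw => ?_⟩⟩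
      have := hyW _ (hsplit v hv w hw)
      simpa [mul_assoc] using this

theorem continuousMul_famTop {𝒰 : Set (Set G)} {hne : 𝒰.Nonempty} (hF : IsNbhdFam 𝒰) :
    @ContinuousMul G (famTop 𝒰 hne hF.inter) _ := by
  letI t := famTop 𝒰 hne hF.inter
  constructor
  rw [continuous_iff_continuousAt]
  rintro ⟨x, y⟩
  intro S hS
  rw [Filter.mem_map]
  obtain ⟨V, hV, hVS⟩ := (mem_nhds_famTop hF _ _).1 hS
  obtain ⟨W, hW, hsplit⟩ := hF.sq V hV
  obtain ⟨W₁, hW₁, hconj⟩ := hF.conj W hW y⁻¹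
  have hA : (fun v => x * v) '' W₁ ∈ @nhds G t x :=
    (mem_nhds_famTop hF _ _).2 ⟨W₁, hW₁, fun v hv => ⟨v, hv, rfl⟩⟩
  have hB : (fun v => y * v) '' W ∈ @nhds G t y :=
    (mem_nhds_famTop hF _ _).2 ⟨W, hW, fun v hv => ⟨v, hv, rfl⟩⟩
  rw [nhds_prod_eq]
  refine Filter.mem_of_superset (Filter.prod_mem_prod hA hB) ?_
  rintro ⟨p, q⟩ ⟨⟨w₁, hw₁, rfl⟩, ⟨w, hw, rfl⟩⟩
  have hc : y⁻¹ * w₁ * y ∈ W := by simpa using hconj w₁ hw₁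
  have hv : (y⁻¹ * w₁ * y) * w ∈ V := hsplit _ hc w hw
  have := hVS _ hv
  have heq : x * y * (y⁻¹ * w₁ * y * w) = x * w₁ * (y * w) := by group
  rw [heq] at this
  exact this



/-- Left translate of a neighborhood of `1` is a neighborhood, in a paratopological group. -/
theorem mul_image_mem_nhds {G : Type*} [Group G] [TopologicalSpace G] [ContinuousMul G]
    (x : G) {V : Set G} (hV : V ∈ nhds (1 : G)) : (fun v => x * v) '' V ∈ nhds x := by
  have := (isOpenMap_mul_left x).image_mem_nhds hV
  simpa using this

/-- The master lemma: a paratopological group with a countable neighborhood base `𝒰` at the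
identity satisfying the Hausdorff-number condition admits a quotient witnessing
projective-Ψ for any `U` containing `⋂₀ 𝒰`. -/
theorem master {G : Type u} [Group G] [TopologicalSpace G] [ContinuousMul G]
    (𝒰 : Set (Set G)) (hc : 𝒰.Countable)
    (hmem : ∀ V ∈ 𝒰, V ∈ nhds (1 : G))
    (hbasis : ∀ S ∈ nhds (1 : G), ∃ V ∈ 𝒰, V ⊆ S)
    (hhaus : ∀ V ∈ 𝒰, ∃ W : ℕ → Set G, (∀ n, W n ∈ 𝒰) ∧ (⋂ n, W n * (W n)⁻¹) ⊆ V)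
    (U : Set G) (hU : ∀ x : G, (∀ V ∈ 𝒰, x ∈ V) → x ∈ U) :
    ∃ (H : Type u) (iG : Group H) (iT : TopologicalSpace H),
      @IsPsiWitness G _ _ U H iG iT := by
  classical
  have h1N : ∀ V ∈ 𝒰, (1 : G) ∈ V := fun V hV => mem_of_mem_nhds (hmem V hV)
  -- square roots inside the family
  have hsq : ∀ V ∈ 𝒰, ∃ W ∈ 𝒰, ∀ a ∈ W, ∀ b ∈ W, a * b ∈ V := by
    intro V hV
    obtain ⟨S, hS, hsp⟩ := exists_nhds_one_split (hmem V hV)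
    obtain ⟨W, hW, hWS⟩ := hbasis S hS
    exact ⟨W, hW, fun a ha b hb => hsp a (hWS ha) b (hWS hb)⟩
  -- conjugation
  have hconj : ∀ V ∈ 𝒰, ∀ x : G, ∃ W ∈ 𝒰, ∀ w ∈ W, x * w * x⁻¹ ∈ V := by
    intro V hV x
    have hcont : Continuous fun w : G => x * w * x⁻¹ :=
      (continuous_const.mul continuous_id).mul continuous_const
    have hpre : (fun w : G => x * w * x⁻¹) ⁻¹' V ∈ nhds (1 : G) := by
      have := hcont.continuousAt (x := (1 : G)).preimage_mem_nhds (by simpa using hmem V hV)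
      exact this
    obtain ⟨W, hW, hWsub⟩ := hbasis _ hpre
    exact ⟨W, hW, fun w hw => hWsub hw⟩
  -- the kernel set
  set Nc : Set G := {z | (∀ V ∈ 𝒰, z ∈ V) ∧ (∀ V ∈ 𝒰, z⁻¹ ∈ V)} with hNc
  -- key absorption lemma
  have key : ∀ z : G,
      (∀ V ∈ 𝒰, ∃ a ∈ V, ∃ b ∈ V, ∃ n ∈ Nc, z = a * b⁻¹ * n) → z ∈ Nc := by
    intro z hz
    have main : ∀ V ∈ 𝒰, z ∈ V ∧ z⁻¹ ∈ V := by
      intro V hV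
      obtain ⟨W, hWmem, hWsub⟩ := hhaus V hV
      have hz2 : ∀ n : ℕ, z ∈ W n * (W n)⁻¹ ∧ z⁻¹ ∈ W n * (W n)⁻¹ := by
        intro n
        obtain ⟨W', hW', hsp⟩ := hsq (W n) (hWmem n)
        obtain ⟨a, ha, b, hb, m, hm, hzeq⟩ := hz W' hW'
        have hWn : ∀ c ∈ W', c ∈ W n := fun c hc => by
          simpa using hsp c hc 1 (h1N W' hW')
        have hminv : m⁻¹ ∈ W' := hm.2 W' hW'
        have hmb : m⁻¹ * b ∈ W n := hsp _ hminv _ hb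
        constructor
        · refine Set.mem_mul.2 ⟨a, hWn a ha, (m⁻¹ * b)⁻¹, Set.mem_inv.2 (by simpa using hmb), ?_⟩
          rw [hzeq]; group
        · refine Set.mem_mul.2 ⟨m⁻¹ * b, hmb, a⁻¹, Set.mem_inv.2 (by simpa using hWn a ha), ?_⟩
          rw [hzeq]; group
      exact ⟨hWsub (Set.mem_iInter.2 fun n => (hz2 n).1),
        hWsub (Set.mem_iInter.2 fun n => (hz2 n).2)⟩
    exact ⟨fun V hV => (main V hV).1, fun V hV => (main V hV).2⟩
  -- the normal subgroup
  let N : Subgroup G :=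
  { carrier := Nc
    one_mem' := ⟨fun V hV => h1N V hV, fun V hV => by simpa using h1N V hV⟩
    mul_mem' := by
      rintro a b ⟨ha1, ha2⟩ ⟨hb1, hb2⟩
      constructor
      · intro V hV
        obtain ⟨W, hW, hsp⟩ := hsq V hV
        exact hsp a (ha1 W hW) b (hb1 W hW)
      · intro V hV
        obtain ⟨W, hW, hsp⟩ := hsq V hV
        rw [mul_inv_rev]
        exact hsp _ (hb2 W hW) _ (ha2 W hW)
    inv_mem' := by
      rintro a ⟨ha1, ha2⟩
      exact ⟨ha2, fun V hV => by simpa using ha1 V hV⟩ }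
  haveI hNormal : N.Normal := by
    constructor
    rintro n ⟨hn1, hn2⟩ g
    constructor
    · intro V hV
      obtain ⟨W, hW, hcj⟩ := hconj V hV g
      exact hcj n (hn1 W hW)
    · intro V hV
      obtain ⟨W, hW, hcj⟩ := hconj V hV g
      have : g * n⁻¹ * g⁻¹ ∈ V := hcj _ (hn2 W hW)
      simpa [mul_assoc] using this
  refine ⟨G ⧸ N, inferInstance, inferInstance, ?_, ?_, ?_, ?_⟩
  · -- ContinuousMul
    constructor
    rw [← (QuotientGroup.isOpenQuotientMap_mk.prodMap
      QuotientGroup.isOpenQuotientMap_mk).continuous_comp_iff]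
    exact QuotientGroup.continuous_mk.comp continuous_mul
  · -- T2
    refine ⟨fun a b hab => ?_⟩
    obtain ⟨x, rfl⟩ := QuotientGroup.mk_surjective a
    obtain ⟨y, rfl⟩ := QuotientGroup.mk_surjective b
    have hxy : x⁻¹ * y ∉ N := fun h => hab (QuotientGroup.eq.2 h)
    have hex : ∃ V ∈ 𝒰, ¬ ∃ a ∈ V, ∃ b ∈ V, ∃ n ∈ Nc, x⁻¹ * y = a * b⁻¹ * n := by
      by_contra h
      push_neg at h
      exact hxy (key _ h)
    obtain ⟨V, hV, hsep⟩ := hex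
    obtain ⟨Ox, hOxsub, hOxopen, hxOx⟩ := mem_nhds_iff.1 (mul_image_mem_nhds x (hmem V hV))
    obtain ⟨Oy, hOysub, hOyopen, hyOy⟩ := mem_nhds_iff.1 (mul_image_mem_nhds y (hmem V hV))
    refine ⟨QuotientGroup.mk '' Ox, QuotientGroup.mk '' Oy,
      QuotientGroup.isOpenQuotientMap_mk.isOpenMap _ hOxopen,
      QuotientGroup.isOpenQuotientMap_mk.isOpenMap _ hOyopen,
      ⟨x, hxOx, rfl⟩, ⟨y, hyOy, rfl⟩, ?_⟩
    rw [Set.disjoint_left]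
    rintro _ ⟨p, hp, rfl⟩ ⟨q, hq, hpq⟩
    obtain ⟨v₁, hv₁, rfl⟩ := hOxsub hp
    obtain ⟨v₂, hv₂, rfl⟩ := hOysub hq
    have hmemN : (x * v₁)⁻¹ * (y * v₂) ∈ N := QuotientGroup.eq.1 hpq.symm
    set n := (x * v₁)⁻¹ * (y * v₂) with hn
    have hn' : v₂ * n * v₂⁻¹ ∈ N := hNormal.conj_mem _ hmemN v₂
    apply hsep
    refine ⟨v₁, hv₁, v₂, hv₂, v₂ * n * v₂⁻¹, hn', ?_⟩
    rw [hn]; group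
  · -- countable pseudocharacter
    refine ⟨(fun V => interior (QuotientGroup.mk '' (V * V⁻¹))) '' 𝒰, hc.image _,
      ?_, ?_⟩
    · rintro _ ⟨V, hV, rfl⟩; exact isOpen_interior
    · apply Set.eq_singleton_iff_unique_mem.2
      constructor
      · rintro _ ⟨V, hV, rfl⟩
        have hVV : V * V⁻¹ ∈ nhds (1 : G) := by
          refine Filter.mem_of_superset (hmem V hV) ?_
          intro a ha
          exact Set.mem_mul.2 ⟨a, ha, 1, Set.mem_inv.2 (by simpa using h1N V hV), mul_one a⟩
        have : QuotientGroup.mk '' (V * V⁻¹) ∈ nhds ((1 : G) : G ⧸ N) :=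
          QuotientGroup.isOpenQuotientMap_mk.isOpenMap.image_mem_nhds hVV
        exact mem_interior_iff_mem_nhds.2 this
      · intro h hh
        obtain ⟨z, rfl⟩ := QuotientGroup.mk_surjective h
        have hz : ∀ V ∈ 𝒰, ∃ a ∈ V, ∃ b ∈ V, ∃ n ∈ Nc, z = a * b⁻¹ * n := by
          intro V hV
          have hmemI : (QuotientGroup.mk z : G ⧸ N) ∈
              interior (QuotientGroup.mk '' (V * V⁻¹)) :=
            hh _ ⟨V, hV, rfl⟩
          obtain ⟨w, hw, hwz⟩ := interior_subset hmemI
          obtain ⟨a, ha, b', hb', hab⟩ := Set.mem_mul.1 hw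
          have hmemN : w⁻¹ * z ∈ N := QuotientGroup.eq.1 hwz
          refine ⟨a, ha, b'⁻¹, Set.mem_inv.1 hb', w⁻¹ * z, hmemN, ?_⟩
          rw [← hab]
          group
        have hzN : z ∈ N := key z hz
        exact (QuotientGroup.eq_one_iff z).2 hzN
  · -- the homomorphism
    refine ⟨QuotientGroup.mk' N, QuotientGroup.continuous_mk, ?_⟩
    intro z hz
    have : z ∈ N := (QuotientGroup.eq_one_iff z).1 hz
    exact hU z this.1



theorem exists_goodFamily {G : Type*} [Group G] [TopologicalSpace G] [ContinuousMul G]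
    (hb : OmegaBalanced G) (hs : HausdorffNumberLeOmega G) (U : Set G)
    (hU : U ∈ nhds (1 : G)) :
    ∃ 𝒰 : Set (Set G), U ∈ 𝒰 ∧ 𝒰.Countable ∧ (∀ V ∈ 𝒰, V ∈ nhds (1 : G)) ∧
      (∀ V ∈ 𝒰, ∀ W ∈ 𝒰, V ∩ W ∈ 𝒰) ∧
      (∀ V ∈ 𝒰, ∃ W ∈ 𝒰, ∀ a ∈ W, ∀ b ∈ W, a * b ∈ V) ∧
      (∀ V ∈ 𝒰, ∀ x : G, ∃ W ∈ 𝒰, ∀ w ∈ W, x * w * x⁻¹ ∈ V) ∧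
      (∀ V ∈ 𝒰, ∃ W : ℕ → Set G, (∀ n, W n ∈ 𝒰) ∧ (⋂ n, W n * (W n)⁻¹) ⊆ V) := by
  classical
  -- choice functions
  have hsq0 : ∀ V : Set G, ∃ W : Set G, W ∈ nhds (1 : G) ∧
      (V ∈ nhds (1 : G) → ∀ a ∈ W, ∀ b ∈ W, a * b ∈ V) := by
    intro V
    by_cases h : V ∈ nhds (1 : G)
    · obtain ⟨W, hW, hsp⟩ := exists_nhds_one_split h
      exact ⟨W, hW, fun _ => hsp⟩
    · exact ⟨Set.univ, Filter.univ_mem, fun h' => absurd h' h⟩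
  choose sq sq_nhds sq_spec using hsq0
  have hbal0 : ∀ V : Set G, ∃ 𝒱 : Set (Set G), 𝒱.Countable ∧
      (∀ W ∈ 𝒱, W ∈ nhds (1 : G)) ∧
      (V ∈ nhds (1 : G) → ∀ x : G, ∃ W ∈ 𝒱, ∀ w ∈ W, x * w * x⁻¹ ∈ V) := by
    intro V
    by_cases h : V ∈ nhds (1 : G)
    · obtain ⟨𝒱, h1, h2, h3⟩ := hb V h
      exact ⟨𝒱, h1, h2, fun _ => h3⟩
    · exact ⟨{Set.univ}, Set.countable_singleton _,
        fun W hW => by rw [Set.mem_singleton_iff] at hW; rw [hW]; exact Filter.univ_mem,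
        fun h' => absurd h' h⟩
  choose bal bal_cnt bal_nhds bal_spec using hbal0
  have hhw0 : ∀ V : Set G, ∃ W : ℕ → Set G, (∀ n, W n ∈ nhds (1 : G)) ∧
      (V ∈ nhds (1 : G) → (⋂ n, W n * (W n)⁻¹) ⊆ V) := by
    intro V
    by_cases h : V ∈ nhds (1 : G)
    · obtain ⟨W, h1, h2⟩ := hs V h
      exact ⟨W, h1, fun _ => h2⟩
    · exact ⟨fun _ => Set.univ, fun _ => Filter.univ_mem, fun h' => absurd h' h⟩
  choose hw hw_nhds hw_spec using hhw0
  -- iterative closure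
  let it : ℕ → Set (Set G) := fun n => Nat.rec {U}
    (fun _ A => A ∪ Set.image2 (· ∩ ·) A A ∪
      ⋃ V ∈ A, insert (sq V) (bal V ∪ Set.range (hw V))) n
  have hit0 : it 0 = {U} := rfl
  have hitsucc : ∀ n, it (n + 1) = it n ∪ Set.image2 (· ∩ ·) (it n) (it n) ∪
      ⋃ V ∈ it n, insert (sq V) (bal V ∪ Set.range (hw V)) := fun _ => rfl
  have hmono : Monotone it := by
    apply monotone_nat_of_le_succ
    intro n
    rw [hitsucc n]
    exact fun V hV => Set.mem_union_left _ (Set.mem_union_left _ hV)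
  have hnhds : ∀ n, ∀ V ∈ it n, V ∈ nhds (1 : G) := by
    intro n
    induction n with
    | zero => intro V hV; rw [hit0, Set.mem_singleton_iff] at hV; rw [hV]; exact hU
    | succ n ih =>
      intro V hV
      rw [hitsucc n] at hV
      rcases hV with (hV | hV) | hV
      · exact ih V hV
      · obtain ⟨V₁, hV₁, V₂, hV₂, rfl⟩ := hV
        exact Filter.inter_mem (ih V₁ hV₁) (ih V₂ hV₂)
      · simp only [Set.mem_iUnion] at hV
        obtain ⟨V₀, hV₀, hVmem⟩ := hV
        rcases Set.mem_insert_iff.1 hVmem with h | h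
        · rw [h]; exact sq_nhds V₀
        · rcases h with h | h
          · exact bal_nhds V₀ V h
          · obtain ⟨k, rfl⟩ := h
            exact hw_nhds V₀ k
  have hcnt : ∀ n, (it n).Countable := by
    intro n
    induction n with
    | zero => rw [hit0]; exact Set.countable_singleton _
    | succ n ih =>
      rw [hitsucc n]
      refine ((ih.union (ih.image2 ih _)).union (ih.biUnion fun V _ => ?_))
      exact ((bal_cnt V).union (Set.countable_range _)).insert _
  refine ⟨⋃ n, it n, Set.mem_iUnion.2 ⟨0, by rw [hit0]; rfl⟩,
    Set.countable_iUnion hcnt, ?_, ?_, ?_, ?_, ?_⟩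
  · intro V hV
    obtain ⟨n, hn⟩ := Set.mem_iUnion.1 hV
    exact hnhds n V hn
  · -- intersections
    intro V hV W hW
    obtain ⟨m, hm⟩ := Set.mem_iUnion.1 hV
    obtain ⟨n, hn⟩ := Set.mem_iUnion.1 hW
    have hm' : V ∈ it (max m n) := hmono (le_max_left m n) hm
    have hn' : W ∈ it (max m n) := hmono (le_max_right m n) hn
    refine Set.mem_iUnion.2 ⟨max m n + 1, ?_⟩
    rw [hitsucc]
    exact Set.mem_union_left _ (Set.mem_union_right _ (Set.mem_image2_of_mem hm' hn'))
  · -- square roots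
    intro V hV
    obtain ⟨n, hn⟩ := Set.mem_iUnion.1 hV
    refine ⟨sq V, Set.mem_iUnion.2 ⟨n + 1, ?_⟩, sq_spec V (hnhds n V hn)⟩
    rw [hitsucc]
    refine Set.mem_union_right _ (Set.mem_iUnion.2 ⟨V, Set.mem_iUnion.2 ⟨hn, ?_⟩⟩)
    exact Set.mem_insert _ _
  · -- conjugation
    intro V hV x
    obtain ⟨n, hn⟩ := Set.mem_iUnion.1 hV
    obtain ⟨W, hW, hWsp⟩ := bal_spec V (hnhds n V hn) x
    refine ⟨W, Set.mem_iUnion.2 ⟨n + 1, ?_⟩, hWsp⟩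
    rw [hitsucc]
    refine Set.mem_union_right _ (Set.mem_iUnion.2 ⟨V, Set.mem_iUnion.2 ⟨hn, ?_⟩⟩)
    exact Set.mem_insert_iff.2 (Or.inr (Or.inl hW))
  · -- Hausdorff families
    intro V hV
    obtain ⟨n, hn⟩ := Set.mem_iUnion.1 hV
    refine ⟨hw V, fun k => Set.mem_iUnion.2 ⟨n + 1, ?_⟩, hw_spec V (hnhds n V hn)⟩
    rw [hitsucc]
    refine Set.mem_union_right _ (Set.mem_iUnion.2 ⟨V, Set.mem_iUnion.2 ⟨hn, ?_⟩⟩)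
    exact Set.mem_insert_iff.2 (Or.inr (Or.inr ⟨k, rfl⟩))


end ProjPsi

/-- Every ω-balanced paratopological group whose Hausdorff number is at most ω is
projectively Ψ: for every neighborhood `U` of the identity there exist a Hausdorff
paratopological group `H` of countable pseudocharacter and a continuous homomorphism
`h : G → H` with `h ⁻¹' {1} ⊆ U`. -/
theorem omegaBalanced_hausdorffNumberLeOmega_projectivelyPsi (G : Type u) [Group G]
    [TopologicalSpace G] [ContinuousMul G]
    (hb : OmegaBalanced G) (hs : HausdorffNumberLeOmega G) :
    ∀ U ∈ nhds (1 : G), ∃ (H : Type u) (iG : Group H) (iT : TopologicalSpace H),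
      @IsPsiWitness G _ _ U H iG iT := by
  intro U hU
  obtain ⟨𝒰, hUmem, hc, hnhds𝒰, hinter, hsq, hconj, hhaus⟩ :=
    ProjPsi.exists_goodFamily hb hs U hU
  have hne : 𝒰.Nonempty := ⟨U, hUmem⟩
  have h1mem : ∀ V ∈ 𝒰, (1 : G) ∈ V := fun V hV => mem_of_mem_nhds (hnhds𝒰 V hV)
  have hF : ProjPsi.IsNbhdFam 𝒰 := ⟨h1mem, hinter, hsq, hconj⟩
  have hCM : @ContinuousMul G (ProjPsi.famTop 𝒰 hne hF.inter) _ :=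
    ProjPsi.continuousMul_famTop hF
  have hmem_t : ∀ V ∈ 𝒰, V ∈ @nhds G (ProjPsi.famTop 𝒰 hne hF.inter) 1 := fun V hV =>
    (ProjPsi.mem_nhds_famTop hF 1 V).2 ⟨V, hV, fun v hv => by simpa using hv⟩
  have hbasis_t : ∀ S ∈ @nhds G (ProjPsi.famTop 𝒰 hne hF.inter) 1, ∃ V ∈ 𝒰, V ⊆ S := by
    intro S hS
    obtain ⟨V, hV, h⟩ := (ProjPsi.mem_nhds_famTop hF 1 S).1 hS
    exact ⟨V, hV, fun v hv => by simpa using h v hv⟩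
  have hU' : ∀ x : G, (∀ V ∈ 𝒰, x ∈ V) → x ∈ U := fun x hx => hx U hUmem
  obtain ⟨H, iG, iT, hPsi⟩ :=
    @ProjPsi.master G _ (ProjPsi.famTop 𝒰 hne hF.inter) hCM 𝒰 hc hmem_t hbasis_t hhaus U hU'
  obtain ⟨w1, w2, w3, hhom, hcont, hker⟩ := hPsi
  have hopen : ∀ O : Set G, IsOpen[ProjPsi.famTop 𝒰 hne hF.inter] O → IsOpen O := by
    intro O hO
    rw [isOpen_iff_mem_nhds]
    intro x hx
    obtain ⟨V, hV, h⟩ := ProjPsi.famTop_isOpen_iff.1 hO x hx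
    refine Filter.mem_of_superset (ProjPsi.mul_image_mem_nhds x (hnhds𝒰 V hV)) ?_
    rintro _ ⟨v, hv, rfl⟩
    exact h v hv
  have hcont' : Continuous hhom := by
    rw [continuous_def]
    intro O hO
    exact hopen _ ((@continuous_def G H (ProjPsi.famTop 𝒰 hne hF.inter) iT hhom).1 hcont O hO)
  exact ⟨H, iG, iT, w1, w2, w3, hhom, hcont', hker⟩
end

section
/- Let Z be a pseudocompact topological group, Y a Hausdorff paratopological group of countable pseudocharacter, and f : Z → Y a continuous group homomorphism with kernel N. Then N is a closed normal subgroup of Z and the quotient topological group Z/N (with the quotient topology) is a compact metrizable topological group. -/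
/-- A topological space is *pseudocompact* if every continuous real-valued function on it
is bounded. -/
def Pseudocompact (X : Type*) [TopologicalSpace X] : Prop :=
  ∀ f : X → ℝ, Continuous f → ∃ M : ℝ, ∀ x : X, |f x| ≤ M

open Set Filter Topology Function Pointwise Uniformity

lemma exists_symm_sq_subset {G : Type*} [Group G] [TopologicalSpace G]
    [IsTopologicalGroup G] {U : Set G} (hU : IsOpen U) (h1 : (1 : G) ∈ U) :
    ∃ V : Set G, IsOpen V ∧ (1 : G) ∈ V ∧ V⁻¹ = V ∧ V * V ⊆ U := by
  obtain ⟨V₀, hV₀o, hV₀1, hV₀m⟩ := exists_open_nhds_one_mul_subset (hU.mem_nhds h1)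
  refine ⟨V₀ ∩ V₀⁻¹, hV₀o.inter hV₀o.inv, ⟨hV₀1, by simpa using hV₀1⟩, ?_, ?_⟩
  · rw [Set.inter_inv, inv_inv, Set.inter_comm]
  · exact (Set.mul_subset_mul Set.inter_subset_left Set.inter_subset_left).trans hV₀m

lemma closure_subset_mul_symm {G : Type*} [Group G] [TopologicalSpace G]
    [IsTopologicalGroup G] (S : Set G) {V : Set G} (hVo : IsOpen V) (h1 : (1 : G) ∈ V)
    (hVs : V⁻¹ = V) : closure S ⊆ S * V := by
  intro x hx
  have hO : IsOpen ((fun z => x⁻¹ * z) ⁻¹' V) := hVo.preimage (continuous_const.mul continuous_id)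
  have hxO : x ∈ (fun z => x⁻¹ * z) ⁻¹' V := by simp [h1]
  obtain ⟨y, hyO, hyS⟩ := mem_closure_iff.1 hx _ hO hxO
  have : y⁻¹ * x ∈ V := by
    rw [← hVs]; simpa using hyO
  exact ⟨y, hyS, y⁻¹ * x, this, by group⟩


lemma exists_chain {G : Type*} [Group G] [TopologicalSpace G] [IsTopologicalGroup G]
    (C : ℕ → Set G) (hCo : ∀ n, IsOpen (C n)) (hC1 : ∀ n, (1 : G) ∈ C n) :
    ∃ W : ℕ → Set G, (∀ n, IsOpen (W n)) ∧ (∀ n, (1 : G) ∈ W n) ∧ (∀ n, (W n)⁻¹ = W n) ∧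
      (∀ n, W (n + 1) * W (n + 1) ⊆ W n) ∧ (∀ n, W n ⊆ C n) := by
  have key : ∀ U : Set G, IsOpen U → (1 : G) ∈ U →
      ∃ V : Set G, IsOpen V ∧ (1 : G) ∈ V ∧ V⁻¹ = V ∧ V * V ⊆ U := fun U hU h1 =>
    exists_symm_sq_subset hU h1
  choose! V hVo hV1 hVs hVm using key
  set W : ℕ → Set G := fun n => Nat.rec (V (C 0)) (fun n Wn => V (Wn ∩ C (n + 1))) n with hW
  have hbase : ∀ n, IsOpen (W n) ∧ (1 : G) ∈ W n := by
    intro n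
    induction n with
    | zero => exact ⟨hVo _ (hCo 0) (hC1 0), hV1 _ (hCo 0) (hC1 0)⟩
    | succ n ih =>
      have ho : IsOpen (W n ∩ C (n + 1)) := ih.1.inter (hCo (n + 1))
      have h1 : (1 : G) ∈ W n ∩ C (n + 1) := ⟨ih.2, hC1 (n + 1)⟩
      exact ⟨hVo _ ho h1, hV1 _ ho h1⟩
  have hWo : ∀ n, IsOpen (W n) := fun n => (hbase n).1
  have hW1 : ∀ n, (1 : G) ∈ W n := fun n => (hbase n).2
  have hsq : ∀ n, W (n + 1) * W (n + 1) ⊆ W n ∩ C (n + 1) := fun n =>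
    hVm _ ((hWo n).inter (hCo (n + 1))) ⟨hW1 n, hC1 (n + 1)⟩
  have hself : ∀ n, W n ⊆ W n * W n := fun n z hz => by
    simpa using Set.mul_mem_mul hz (hW1 n)
  refine ⟨W, hWo, hW1, ?_, fun n => (hsq n).trans Set.inter_subset_left, ?_⟩
  · intro n
    induction n with
    | zero => exact hVs _ (hCo 0) (hC1 0)
    | succ n _ => exact hVs _ ((hWo n).inter (hCo (n + 1))) ⟨hW1 n, hC1 (n + 1)⟩
  · intro n
    cases n with
    | zero => exact ((hself 0).trans (hVm _ (hCo 0) (hC1 0)))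
    | succ n => exact (hself (n + 1)).trans ((hsq n).trans Set.inter_subset_right)


lemma exists_bump {G : Type*} [Group G] [TopologicalSpace G] [IsTopologicalGroup G]
    {O : Set G} (hO : IsOpen O) {x : G} (hx : x ∈ O) :
    ∃ g : G → ℝ, Continuous g ∧ g x = 1 ∧ (∀ z, 0 ≤ g z) ∧ (∀ z, g z ≤ 1) ∧
      ∀ z, z ∉ O → g z = 0 := by
  classical
  have hO' : IsOpen ((fun z => x * z) ⁻¹' O) := hO.preimage (continuous_const.mul continuous_id)
  have h1O' : (1 : G) ∈ (fun z => x * z) ⁻¹' O := by simpa using hx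
  obtain ⟨W, hWo, hW1, hWs, hWsq, hWsub⟩ :=
    exists_chain (fun _ => (fun z => x * z) ⁻¹' O) (fun _ => hO') (fun _ => h1O')
  have hWdec : ∀ n, W (n + 1) ⊆ W n := fun n z hz =>
    hWsq n (by simpa using Set.mul_mem_mul hz (hW1 (n + 1)))
  have hWanti : Antitone W := antitone_nat_of_succ_le hWdec
  set D : ℕ → Set (G × G) := fun n => {p | p.1⁻¹ * p.2 ∈ W n} with hD
  have hDanti : Antitone D := fun m n hmn p hp => hWanti hmn hp
  set F : Filter (G × G) := ⨅ n, 𝓟 (D n) with hF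
  have hFbasis : F.HasBasis (fun _ : ℕ => True) D :=
    hasBasis_iInf_principal hDanti.directed_ge
  have hrefl : ∀ r ∈ F, ∀ y : G, (y, y) ∈ r := by
    intro r hr y
    obtain ⟨n, -, hn⟩ := hFbasis.mem_iff.1 hr
    exact hn (by simp [hD, hW1 n])
  have hsymm : ∀ r ∈ F, Prod.swap ⁻¹' r ∈ F := by
    intro r hr
    obtain ⟨n, -, hn⟩ := hFbasis.mem_iff.1 hr
    refine hFbasis.mem_iff.2 ⟨n, trivial, fun p hp => ?_⟩
    refine hn (show (p.2, p.1) ∈ D n from ?_)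
    have : (p.1⁻¹ * p.2)⁻¹ ∈ (W n)⁻¹ := Set.inv_mem_inv.2 hp
    rw [hWs n] at this
    simpa [hD, mul_comm] using this
  have hcomp : ∀ r ∈ F, ∃ t ∈ F, SetRel.comp t t ⊆ r := by
    intro r hr
    obtain ⟨n, -, hn⟩ := hFbasis.mem_iff.1 hr
    refine ⟨D (n + 1), hFbasis.mem_of_mem trivial, ?_⟩
    rintro ⟨a, c⟩ ⟨b, hab, hbc⟩
    refine hn (show a⁻¹ * c ∈ W n from ?_)
    have : (a⁻¹ * b) * (b⁻¹ * c) ∈ W (n + 1) * W (n + 1) := Set.mul_mem_mul hab hbc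
    simpa [mul_assoc] using hWsq n this
  let core : UniformSpace.Core G := UniformSpace.Core.mk' F hrefl hsymm hcomp
  let u : UniformSpace G := .ofCore core
  have hu : 𝓤[u] = F := rfl
  haveI hcg : @Filter.IsCountablyGenerated _ (𝓤[u]) := by
    rw [hu]; exact hFbasis.isCountablyGenerated
  obtain ⟨P, hP⟩ := @UniformSpace.metrizable_uniformity G u hcg
  set d : G → ℝ := fun z => @dist G P.toDist x z with hd
  have hD0 : D 0 ∈ 𝓤[u] := by rw [hu]; exact hFbasis.mem_of_mem trivial
  have hD0' : D 0 ∈ 𝓤[P.toUniformSpace] := by rw [hP]; exact hD0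
  obtain ⟨ε, hε, hball⟩ := (@Metric.mem_uniformity_dist G P _).1 hD0'
  -- identity is continuous from the original topology to the `u` topology
  have hidc : @Continuous G G _ u.toTopologicalSpace id := by
    rw [@continuous_def _ _ _ u.toTopologicalSpace]
    intro s hs
    rw [@isOpen_uniformity G u] at hs
    rw [isOpen_iff_mem_nhds]
    intro y hy
    obtain ⟨n, -, hn⟩ := hFbasis.mem_iff.1 (hs y hy)
    refine mem_nhds_iff.2 ⟨(fun z => y⁻¹ * z) ⁻¹' W n, ?_, ?_, ?_⟩
    · intro z hz
      exact hn (show (y, z) ∈ D n from hz) rfl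
    · exact (hWo n).preimage (continuous_const.mul continuous_id)
    · simp [hW1 n]
  have hidc' : @Continuous G G _ P.toUniformSpace.toTopologicalSpace id := by
    rw [hP]; exact hidc
  have h1 : @Continuous G ℝ P.toUniformSpace.toTopologicalSpace _
      (fun z => @dist G P.toDist x z) :=
    @Continuous.dist G G P P.toUniformSpace.toTopologicalSpace (fun _ => x) id
      (@continuous_const G G P.toUniformSpace.toTopologicalSpace
        P.toUniformSpace.toTopologicalSpace x)
      (@continuous_id G P.toUniformSpace.toTopologicalSpace)
  have hdc : Continuous d :=
    @Continuous.comp G G ℝ _ P.toUniformSpace.toTopologicalSpace _ _ _ h1 hidc'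
  have hd_nonneg : ∀ z, 0 ≤ d z := fun z => @dist_nonneg G P x z
  refine ⟨fun z => max 0 (1 - d z / ε), ?_, ?_, fun z => le_max_left _ _, ?_, ?_⟩
  · exact continuous_const.max (continuous_const.sub (hdc.div_const ε))
  · have : d x = 0 := @dist_self G P x
    simp [this]
  · intro z
    have : 1 - d z / ε ≤ 1 := by
      have : 0 ≤ d z / ε := div_nonneg (hd_nonneg z) hε.le
      linarith
    exact max_le (by norm_num) this
  · intro z hz
    have hdz : ε ≤ d z := by
      by_contra h
      push_neg at h
      have : (x, z) ∈ D 0 := hball h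
      have : x * (x⁻¹ * z) ∈ O := hWsub 0 this
      simp only [mul_inv_cancel_left] at this
      exact hz this
    have : 1 - d z / ε ≤ 0 := by
      have : 1 ≤ d z / ε := (one_le_div hε).2 hdz
      linarith
    simp [max_eq_left this]


/-- A pseudocompact topological group is feebly compact. -/
lemma feeble_of_pseudocompact {G : Type*} [Group G] [TopologicalSpace G] [IsTopologicalGroup G]
    (hG : Pseudocompact G) (U : ℕ → Set G) (hUo : ∀ n, IsOpen (U n))
    (hUne : ∀ n, (U n).Nonempty) (hUdec : ∀ n, U (n + 1) ⊆ U n) :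
    ∃ p, ∀ n, p ∈ closure (U n) := by
  classical
  by_contra hcon
  push_neg at hcon
  choose idx hidx using hcon
  choose x hx using hUne
  have hUanti : Antitone U := antitone_nat_of_succ_le hUdec
  choose g hgc hgx hg0 hg1 hgs using fun n => exists_bump (hUo n) (hx n)
  set h : ℕ → G → ℝ := fun n z => (n : ℝ) * g n z with hh
  have hsupp : ∀ n, Function.support (h n) ⊆ U n := by
    intro n z hz
    by_contra hzU
    exact hz (by simp [hh, hgs n z hzU])
  have hlf : LocallyFinite fun n => Function.support (h n) := by
    intro p
    refine ⟨(closure (U (idx p)))ᶜ, (isClosed_closure.isOpen_compl).mem_nhds (hidx p), ?_⟩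
    apply Set.Finite.subset (Set.finite_Iio (idx p))
    intro k hk
    rcases lt_or_ge k (idx p) with h' | h'
    · exact h'
    · exfalso
      obtain ⟨z, hz1, hz2⟩ := hk
      exact hz2 (subset_closure (hUanti h' (hsupp k hz1)))
  have hFc : Continuous fun z => ∑ᶠ n, h n z :=
    continuous_finsum (fun n => continuous_const.mul (hgc n)) hlf
  obtain ⟨M, hM⟩ := hG _ hFc
  obtain ⟨n, hn⟩ := exists_nat_gt M
  have hfin : (Function.support fun k => h k (x n)).Finite := by
    apply Set.Finite.subset (hlf.point_finite (x n))
    intro k hk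
    exact hk
  have hle : h n (x n) ≤ ∑ᶠ k, h k (x n) :=
    single_le_finsum n hfin fun k => mul_nonneg (Nat.cast_nonneg k) (hg0 k (x n))
  have : (n : ℝ) ≤ ∑ᶠ k, h k (x n) := by
    have : h n (x n) = n := by simp [hh, hgx n]
    linarith [hle, this.symm.le]
  have := (hM (x n)).trans_lt hn
  rw [abs_lt] at this
  linarith [this.2]


lemma compactSpace_of_feeble {X : Type*} [TopologicalSpace X]
    [TopologicalSpace.MetrizableSpace X]
    (hfe : ∀ U : ℕ → Set X, (∀ n, IsOpen (U n)) → (∀ n, (U n).Nonempty) →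
      (∀ n, U (n + 1) ⊆ U n) → ∃ p, ∀ n, p ∈ closure (U n)) :
    CompactSpace X := by
  rcases isEmpty_or_nonempty X with hX | hX
  · infer_instance
  letI : MetricSpace X := TopologicalSpace.metrizableSpaceMetric X
  rw [compactSpace_iff_seqCompactSpace]
  refine ⟨fun x _ => ?_⟩
  set U : ℕ → Set X := fun n => ⋃ k, ⋃ (_ : n ≤ k), Metric.ball (x k) ((k : ℝ) + 1)⁻¹ with hU
  have hUo : ∀ n, IsOpen (U n) := fun n =>
    isOpen_iUnion fun k => isOpen_iUnion fun _ => Metric.isOpen_ball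
  have hUne : ∀ n, (U n).Nonempty := by
    intro n
    refine ⟨x n, Set.mem_iUnion.2 ⟨n, Set.mem_iUnion.2 ⟨le_rfl, ?_⟩⟩⟩
    simp [Metric.mem_ball]
    positivity
  have hUdec : ∀ n, U (n + 1) ⊆ U n := by
    intro n z hz
    simp only [hU, Set.mem_iUnion] at hz ⊢
    obtain ⟨k, hk, hzk⟩ := hz
    exact ⟨k, le_trans (Nat.le_succ n) hk, hzk⟩
  obtain ⟨p, hp⟩ := hfe U hUo hUne hUdec
  have hcl : MapClusterPt p atTop x := by
    rw [mapClusterPt_iff_frequently]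
    intro s hs
    obtain ⟨ε, hε, hball⟩ := Metric.mem_nhds_iff.1 hs
    rw [Filter.frequently_atTop]
    intro n
    obtain ⟨m₀, hm₀⟩ := exists_nat_gt (2 / ε)
    set m := max n m₀ with hm
    have hmm : (m₀ : ℝ) ≤ (m : ℝ) := Nat.cast_le.2 (le_max_right n m₀)
    have hminv : ((m : ℝ) + 1)⁻¹ < ε / 2 := by
      rw [inv_lt_comm₀ (by positivity) (by positivity), inv_div]
      linarith
    obtain ⟨q, hq, hqd⟩ := Metric.mem_closure_iff.1 (hp m) (ε / 2) (by positivity)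
    simp only [hU, Set.mem_iUnion] at hq
    obtain ⟨k, hk, hqk⟩ := hq
    refine ⟨k, le_trans (le_max_left n m₀) hk, hball ?_⟩
    rw [Metric.mem_ball]
    have h1 : dist (x k) q < ((k : ℝ) + 1)⁻¹ := by
      rw [dist_comm]; exact hqk
    have h2 : ((k : ℝ) + 1)⁻¹ ≤ ((m : ℝ) + 1)⁻¹ := by
      apply inv_anti₀ (by positivity)
      have : (m : ℝ) ≤ k := by exact_mod_cast hk
      linarith
    calc dist (x k) p ≤ dist (x k) q + dist q p := dist_triangle _ _ _
      _ < ((k : ℝ) + 1)⁻¹ + ε / 2 := by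
          rw [dist_comm q p]; exact add_lt_add_of_lt_of_le h1 hqd.le
      _ ≤ ((m : ℝ) + 1)⁻¹ + ε / 2 := by linarith
      _ < ε / 2 + ε / 2 := by linarith
      _ = ε := by ring
  obtain ⟨ψ, hψ, hten⟩ := TopologicalSpace.FirstCountableTopology.tendsto_subseq hcl
  exact ⟨p, Set.mem_univ _, ψ, hψ, hten⟩


/-- Let `Z` be a pseudocompact topological group, `Y` a Hausdorff paratopological group of
countable pseudocharacter and `f : Z → Y` a continuous homomorphism with kernel `N`.
Then `N` is a closed normal subgroup of `Z` and the quotient topological group `Z ⧸ N`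
(with the quotient topology) is a compact metrizable topological group. -/
theorem quotient_of_pseudocompact_compact_metrizable {Z Y : Type*}
    [Group Z] [TopologicalSpace Z] [IsTopologicalGroup Z] (hZ : Pseudocompact Z)
    [Group Y] [TopologicalSpace Y] [ContinuousMul Y] [T2Space Y]
    (hY : HasCountablePseudocharacter Y) (f : Z →* Y) (hf : Continuous f) :
    IsClosed (f.ker : Set Z) ∧ f.ker.Normal ∧
      IsTopologicalGroup (Z ⧸ f.ker) ∧ CompactSpace (Z ⧸ f.ker) ∧
      TopologicalSpace.MetrizableSpace (Z ⧸ f.ker) := by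
  classical
  have hker : IsClosed (f.ker : Set Z) := by
    have h : (f.ker : Set Z) = f ⁻¹' {1} := by
      ext z; simp [MonoidHom.mem_ker]
    rw [h]
    exact isClosed_singleton.preimage hf
  -- countable pseudocharacter data as a sequence
  obtain ⟨S, hScount, hSopen, hSinter⟩ := hY
  obtain ⟨e, he⟩ := (hScount.insert Set.univ).exists_eq_range (Set.insert_nonempty _ _)
  have heopen : ∀ n, IsOpen (e n) := by
    intro n
    have hmem : e n ∈ insert Set.univ S := he ▸ Set.mem_range_self n
    rcases hmem with h | h
    · rw [h]; exact isOpen_univ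
    · exact hSopen _ h
  have hinter' : (⋂ n, e n) = ({1} : Set Y) := by
    rw [← Set.sInter_range, ← he, Set.sInter_insert, hSinter]
    exact Set.univ_inter _
  have hy1 : ∀ n, (1 : Y) ∈ e n := by
    intro n
    have : (1 : Y) ∈ ⋂ n, e n := by rw [hinter']; exact rfl
    exact Set.mem_iInter.1 this n
  -- the quotient group
  set N := f.ker with hNdef
  have hfeQ : ∀ U : ℕ → Set (Z ⧸ N), (∀ n, IsOpen (U n)) → (∀ n, (U n).Nonempty) →
      (∀ n, U (n + 1) ⊆ U n) → ∃ p, ∀ n, p ∈ closure (U n) := by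
    intro U hUo hUne hUdec
    obtain ⟨p, hp⟩ := feeble_of_pseudocompact hZ (fun n => QuotientGroup.mk ⁻¹' U n)
      (fun n => (hUo n).preimage continuous_quot_mk)
      (fun n => by
        obtain ⟨q, hq⟩ := hUne n
        obtain ⟨z, rfl⟩ := QuotientGroup.mk_surjective q
        exact ⟨z, hq⟩)
      (fun n => Set.preimage_mono (hUdec n))
    refine ⟨QuotientGroup.mk p, fun n => ?_⟩
    have h1 : (QuotientGroup.mk p : Z ⧸ N) ∈
        QuotientGroup.mk '' closure (QuotientGroup.mk ⁻¹' U n) := ⟨p, hp n, rfl⟩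
    have h2 := image_closure_subset_closure_image
        (continuous_quot_mk : Continuous (QuotientGroup.mk : Z → Z ⧸ N))
        (s := QuotientGroup.mk ⁻¹' U n)
    exact closure_mono (Set.image_preimage_subset _ _) (h2 h1)
  -- Gδ sets in the quotient
  set A : ℕ → Set (Z ⧸ N) := fun n => QuotientGroup.mk '' (f ⁻¹' e n) with hA
  have hAo : ∀ n, IsOpen (A n) :=
    fun n => QuotientGroup.isOpenMap_coe _ ((heopen n).preimage hf)
  have hA1 : ∀ n, (1 : Z ⧸ N) ∈ A n := fun n => ⟨1, by simp [hy1 n], rfl⟩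
  have hAinter : ∀ q : Z ⧸ N, (∀ n, q ∈ A n) → q = 1 := by
    intro q hq
    obtain ⟨z, rfl⟩ := QuotientGroup.mk_surjective q
    have hfz : ∀ n, f z ∈ e n := by
      intro n
      obtain ⟨w, hw, hwq⟩ := hq n
      have hmem : w⁻¹ * z ∈ N := QuotientGroup.eq.1 hwq
      have : f z = f w := by
        have h1 : f (w⁻¹ * z) = 1 := hmem
        have h2 : f z = f w * f (w⁻¹ * z) := by
          rw [← map_mul, mul_inv_cancel_left]
        rw [h2, h1, mul_one]
      exact this ▸ hw
    have : f z ∈ ({1} : Set Y) := hinter' ▸ Set.mem_iInter.2 hfz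
    have hz : z ∈ N := MonoidHom.mem_ker.2 (by simpa using this)
    rwa [QuotientGroup.eq_one_iff]
  -- the chain of symmetric neighborhoods in the quotient
  obtain ⟨W, hWo, hW1, hWs, hWsq, hWsub⟩ := exists_chain A hAo hA1
  have hWdec : ∀ n, W (n + 1) ⊆ W n := fun n q hq =>
    hWsq n (by simpa using Set.mul_mem_mul hq (hW1 (n + 1)))
  -- neighborhood base at 1
  have hbase : ∀ O : Set (Z ⧸ N), IsOpen O → (1 : Z ⧸ N) ∈ O → ∃ n, W n ⊆ O := by
    intro O hO h1
    by_contra hcon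
    push_neg at hcon
    obtain ⟨V, hVo, hV1, hVs, hVm⟩ := exists_symm_sq_subset hO h1
    have hclV : closure V ⊆ O := (closure_subset_mul_symm V hVo hV1 hVs).trans hVm
    set D : ℕ → Set (Z ⧸ N) := fun n => W n \ closure V with hD
    have hDo : ∀ n, IsOpen (D n) := fun n => (hWo n).sdiff isClosed_closure
    have hDne : ∀ n, (D n).Nonempty := by
      intro n
      obtain ⟨xq, hx1, hx2⟩ := Set.not_subset.1 (hcon n)
      exact ⟨xq, hx1, fun hc => hx2 (hclV hc)⟩
    have hDdec : ∀ n, D (n + 1) ⊆ D n := fun n => Set.diff_subset_diff_left (hWdec n)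
    obtain ⟨p, hp⟩ := hfeQ D hDo hDne hDdec
    have hpW : ∀ n, p ∈ W n := by
      intro n
      have h1' : p ∈ closure (W (n + 1)) :=
        closure_mono Set.diff_subset (hp (n + 1))
      exact hWsq n (closure_subset_mul_symm (W (n + 1)) (hWo (n + 1)) (hW1 (n + 1))
        (hWs (n + 1)) h1')
    have hp1 : p = 1 := hAinter p fun n => hWsub n (hpW n)
    obtain ⟨y, hy1', hy2⟩ := mem_closure_iff.1 (hp 0) V hVo (hp1 ▸ hV1)
    exact hy2.2 (subset_closure hy1')
  have hbasis : (𝓝 (1 : Z ⧸ N)).HasBasis (fun _ : ℕ => True) W := by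
    constructor
    intro t
    constructor
    · intro ht
      obtain ⟨O, hOsub, hOo, hO1⟩ := mem_nhds_iff.1 ht
      obtain ⟨n, hn⟩ := hbase O hOo hO1
      exact ⟨n, trivial, hn.trans hOsub⟩
    · rintro ⟨n, -, hn⟩
      exact mem_of_superset ((hWo n).mem_nhds (hW1 n)) hn
  haveI : (𝓝 (1 : Z ⧸ N)).IsCountablyGenerated := hbasis.isCountablyGenerated
  haveI : IsClosed ((N : Subgroup Z) : Set Z) := hker
  haveI : T3Space (Z ⧸ N) := inferInstance
  have hmetr : TopologicalSpace.MetrizableSpace (Z ⧸ N) := by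
    letI : UniformSpace (Z ⧸ N) := IsTopologicalGroup.rightUniformSpace (Z ⧸ N)
    haveI : (𝓤 (Z ⧸ N)).IsCountablyGenerated := by
      rw [uniformity_eq_comap_nhds_one']
      exact Filter.comap.isCountablyGenerated _ _
    exact UniformSpace.metrizableSpace
  have hcompact : CompactSpace (Z ⧸ N) := by
    haveI := hmetr
    exact compactSpace_of_feeble hfeQ
  exact ⟨hker, inferInstance, inferInstance, hcompact, hmetr⟩
end

section
/- Let G be a Hausdorff paratopological group and S a subgroup of G whose closure K = cl(S) in G is compact. Then K is a subgroup of G (closed under multiplication and inversion), and K, with the subspace topology, is a compact topological group; in particular, inversion is continuous on K. -/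
/-- Let `G` be a Hausdorff paratopological group (a group with a Hausdorff topology making
multiplication jointly continuous) and `S` a subgroup of `G` whose closure `K` in `G` is
compact.  Then `K` is a subgroup of `G` (i.e. it is closed under multiplication and
inversion) and `K`, with the subspace topology, is a compact topological group; in
particular inversion is continuous on `K`. -/
theorem closure_of_subgroup_compact_is_topological_group {G : Type*}
    [Group G] [TopologicalSpace G] [ContinuousMul G] [T2Space G]
    (S : Subgroup G) (hK : IsCompact (closure (S : Set G))) :
    ∃ K : Subgroup G, (K : Set G) = closure (S : Set G) ∧
      CompactSpace K ∧ IsTopologicalGroup K := by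
  set Kc : Set G := closure (S : Set G) with hKc
  have hKclosed : IsClosed Kc := isClosed_closure
  set M : Submonoid G := S.toSubmonoid.topologicalClosure with hM
  have hMcar : (M : Set G) = Kc := rfl
  have hinv : ∀ x ∈ Kc, x⁻¹ ∈ Kc := by
    intro x hx
    have hxM : x ∈ M := hx
    set P : Set G := Set.range (fun n : ℕ => x ^ (n + 1)) with hP
    have hPsub : P ⊆ Kc := by
      rintro _ ⟨n, rfl⟩
      exact hMcar ▸ pow_mem hxM (n + 1)
    have hAsub : closure P ⊆ Kc := closure_minimal hPsub hKclosed
    have hAcompact : IsCompact (closure P) :=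
      hK.of_isClosed_subset isClosed_closure hAsub
    have hPmul : ∀ a ∈ P, ∀ b ∈ P, a * b ∈ P := by
      rintro _ ⟨n, rfl⟩ _ ⟨m, rfl⟩
      refine ⟨n + m + 1, ?_⟩
      show x ^ (n + m + 1 + 1) = x ^ (n + 1) * x ^ (m + 1)
      rw [show n + m + 1 + 1 = (n + 1) + (m + 1) from by omega, pow_add]
    have hAmul : ∀ a ∈ closure P, ∀ b ∈ closure P, a * b ∈ closure P := by
      intro a ha b hb
      let Ps : Subsemigroup G := { carrier := P, mul_mem' := fun h1 h2 => hPmul _ h1 _ h2 }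
      exact Ps.topologicalClosure.mul_mem ha hb
    obtain ⟨m, hmA, hm⟩ := exists_idempotent_in_compact_subsemigroup
      (fun r => continuous_mul_right r) (closure P) ⟨x, subset_closure ⟨0, by simp⟩⟩
      hAcompact hAmul
    have hm1 : m = 1 := mul_left_cancel (a := m) (b := m) (c := 1) (by simpa using hm)
    have h1A : (1 : G) ∈ closure P := hm1 ▸ hmA
    have hφ : Continuous (fun y : G => x⁻¹ * y) := continuous_mul_left _
    have hmem : x⁻¹ ∈ closure ((fun y : G => x⁻¹ * y) '' P) :=
      image_closure_subset_closure_image (s := P) hφ ⟨1, h1A, by simp⟩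
    refine closure_minimal ?_ hKclosed hmem
    rintro _ ⟨_, ⟨n, rfl⟩, rfl⟩
    show x⁻¹ * x ^ (n + 1) ∈ Kc
    have hxn : x⁻¹ * x ^ (n + 1) = x ^ n := by group
    rw [hxn]
    exact hMcar ▸ pow_mem hxM n
  let K : Subgroup G :=
    { carrier := Kc
      mul_mem' := fun h1 h2 => M.mul_mem h1 h2
      one_mem' := M.one_mem
      inv_mem' := fun h => hinv _ h }
  refine ⟨K, rfl, isCompact_iff_compactSpace.mp hK, ?_⟩
  haveI : ContinuousMul K :=
    ⟨((continuous_fst.subtype_val.comp continuous_id).mul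
        (continuous_snd.subtype_val.comp continuous_id)).subtype_mk _⟩
  have key : Continuous (fun a : K => ((a : G))⁻¹) := by
    rw [continuous_iff_isClosed]
    intro C hC
    have hmulclosed : IsClosed {p : G × G | p.1 * p.2 = 1} :=
      isClosed_eq (continuous_fst.mul continuous_snd) continuous_const
    have hT : IsCompact ((Kc ×ˢ (Kc ∩ C)) ∩ {p : G × G | p.1 * p.2 = 1}) :=
      (hK.prod (hK.inter_right hC)).inter_right hmulclosed
    have hD : IsCompact (Prod.fst '' ((Kc ×ˢ (Kc ∩ C)) ∩ {p : G × G | p.1 * p.2 = 1})) :=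
      hT.image continuous_fst
    have hDset : (fun a : K => ((a : G))⁻¹) ⁻¹' C =
        Subtype.val ⁻¹' (Prod.fst '' ((Kc ×ˢ (Kc ∩ C)) ∩ {p : G × G | p.1 * p.2 = 1})) := by
      ext p
      simp only [Set.mem_preimage, Set.mem_image, Set.mem_inter_iff, Set.mem_prod,
        Set.mem_setOf_eq]
      constructor
      · intro h
        refine ⟨((p : G), (p : G)⁻¹), ⟨⟨p.2, hinv _ p.2, h⟩, ?_⟩, rfl⟩
        group
      · rintro ⟨⟨a', b⟩, ⟨⟨-, -, hbC⟩, hab⟩, heq⟩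
        have hb : b = ((p : G))⁻¹ := by
          have : a' = (p : G) := heq
          subst this
          exact eq_inv_of_mul_eq_one_right hab
        rwa [hb] at hbC
    rw [hDset]
    exact hD.isClosed.preimage continuous_subtype_val
  exact { toContinuousMul := inferInstance
          toContinuousInv := ⟨key.subtype_mk _⟩ }
end

section
/- Let K be a compact topological group, G a Hausdorff paratopological group, and f : K → G a continuous group homomorphism. Then the image f[K] is a closed compact subset of G, and f[K], with the subspace topology, is a compact topological group (in particular, inversion is continuous on f[K]). -/
/-- Let `K` be a compact topological group, `G` a Hausdorff paratopological group (a group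
with a Hausdorff topology making multiplication jointly continuous) and `f : K → G` a
continuous homomorphism.  Then the image `f[K]` is a closed compact subset of `G` and
`f[K]`, with the subspace topology, is a compact topological group (in particular,
inversion is continuous on `f[K]`). -/
theorem image_of_compact_group_is_closed_topological_group {K G : Type*}
    [Group K] [TopologicalSpace K] [IsTopologicalGroup K] [CompactSpace K]
    [Group G] [TopologicalSpace G] [ContinuousMul G] [T2Space G]
    (f : K →* G) (hf : Continuous f) :
    IsClosed (Set.range f) ∧ IsCompact (Set.range f) ∧
      CompactSpace f.range ∧ IsTopologicalGroup f.range := by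
  have hcomp : IsCompact (Set.range f) := isCompact_range hf
  have hcl : IsClosed (Set.range f) := hcomp.isClosed
  have hrange : (f.range : Set G) = Set.range f := f.coe_range
  have hcompS : CompactSpace f.range := by
    have h := hcomp
    rw [← hrange] at h
    exact isCompact_iff_compactSpace.mp h
  refine ⟨hcl, hcomp, hcompS, ?_⟩
  -- the corestriction of `f` to its range
  set g : K → f.range := ⇑f.rangeRestrict with hg
  have hgc : Continuous g := hf.subtype_mk _
  have hgs : Function.Surjective g := f.rangeRestrict_surjective
  have hq : Topology.IsQuotientMap g :=
    (hgc.isClosedMap).isQuotientMap hgc hgs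
  have hmul : ContinuousMul f.range :=
    ⟨continuous_induced_rng.2 <|
      ((continuous_subtype_val.comp continuous_fst).mul
        (continuous_subtype_val.comp continuous_snd))⟩
  have hinv : ContinuousInv f.range := by
    have hc : Continuous ((fun x : f.range => x⁻¹) ∘ g) := by
      have heq : ((fun x : f.range => x⁻¹) ∘ g) = g ∘ (fun k : K => k⁻¹) := by
        funext k
        ext
        simp [g]
      rw [heq]
      exact hgc.comp continuous_inv
    exact ⟨hq.continuous_iff.2 hc⟩
  exact IsTopologicalGroup.mk
end

section
/- Let (G, τ) be a paratopological group and let τ^♯ be the smallest topology on G containing τ together with the sets U⁻¹ = {x⁻¹ : x ∈ U} for all τ-open sets U (equivalently, the join of τ and the pullback of τ under inversion). Then (G, τ^♯) is a topological group, the sets U ∩ U⁻¹, where U ranges over τ-neighborhoods of the identity, form a neighborhood base at the identity for τ^♯, and if τ satisfies the T0 separation axiom then τ^♯ is Hausdorff. -/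
open Pointwise Topology Filter

private lemma sharp_le_prod {G : Type*} [Group G] (τ σ : TopologicalSpace G) :
    (@instTopologicalSpaceProd G G (τ ⊓ σ) (τ ⊓ σ)) ≤ @instTopologicalSpaceProd G G τ τ := by
  exact inf_le_inf (induced_mono inf_le_left)
    (induced_mono inf_le_left)

private lemma tg_aux {G : Type*} [Group G] (τ : TopologicalSpace G)
    (hτ : @ContinuousMul G τ _) :
    @IsTopologicalGroup G (τ ⊓ TopologicalSpace.induced (fun x : G => x⁻¹) τ) _ := by
  set σ : TopologicalSpace G := TopologicalSpace.induced (fun x : G => x⁻¹) τ with hσdef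
  set s : TopologicalSpace G := τ ⊓ σ with hsdef
  have hsle : s ≤ τ := inf_le_left
  have hid : @Continuous G G s τ id := continuous_id_of_le hsle
  have hinvτ : @Continuous G G s τ (fun x : G => x⁻¹) := by
    have h1 : @Continuous G G σ τ (fun x : G => x⁻¹) := continuous_induced_dom
    exact @Continuous.comp G G G s σ τ _ _ h1 (continuous_id_of_le inf_le_right)
  have hmulττ : @Continuous (G × G) G (@instTopologicalSpaceProd G G τ τ) τ
      (fun p : G × G => p.1 * p.2) := @continuous_mul G τ _ hτ
  have hpairs : @Continuous (G × G) (G × G) (@instTopologicalSpaceProd G G s s)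
      (@instTopologicalSpaceProd G G τ τ) id := continuous_id_of_le (sharp_le_prod τ σ)
  have hmulτ : @Continuous (G × G) G (@instTopologicalSpaceProd G G s s) τ
      (fun p : G × G => p.1 * p.2) :=
    @Continuous.comp (G × G) (G × G) G (@instTopologicalSpaceProd G G s s)
      (@instTopologicalSpaceProd G G τ τ) τ _ _ hmulττ hpairs
  have hfst : @Continuous (G × G) G (@instTopologicalSpaceProd G G s s) τ
      (fun p : G × G => p.1) :=
    @Continuous.comp (G × G) G G (@instTopologicalSpaceProd G G s s) s τ _ _ hid
      (@continuous_fst G G s s)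
  have hsnd : @Continuous (G × G) G (@instTopologicalSpaceProd G G s s) τ
      (fun p : G × G => p.2) :=
    @Continuous.comp (G × G) G G (@instTopologicalSpaceProd G G s s) s τ _ _ hid
      (@continuous_snd G G s s)
  have hfstinv : @Continuous (G × G) G (@instTopologicalSpaceProd G G s s) τ
      (fun p : G × G => p.1⁻¹) :=
    @Continuous.comp (G × G) G G (@instTopologicalSpaceProd G G s s) s τ _ _ hinvτ
      (@continuous_fst G G s s)
  have hsndinv : @Continuous (G × G) G (@instTopologicalSpaceProd G G s s) τ
      (fun p : G × G => p.2⁻¹) :=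
    @Continuous.comp (G × G) G G (@instTopologicalSpaceProd G G s s) s τ _ _ hinvτ
      (@continuous_snd G G s s)
  have hmulσ : @Continuous (G × G) G (@instTopologicalSpaceProd G G s s) σ
      (fun p : G × G => p.1 * p.2) := by
    rw [hσdef]
    refine continuous_induced_rng.mpr ?_
    have hpair : @Continuous (G × G) (G × G) (@instTopologicalSpaceProd G G s s)
        (@instTopologicalSpaceProd G G τ τ) (fun p : G × G => (p.2⁻¹, p.1⁻¹)) :=
      @Continuous.prodMk G G (G × G) τ τ (@instTopologicalSpaceProd G G s s) _ _
        hsndinv hfstinv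
    have := @Continuous.comp (G × G) (G × G) G (@instTopologicalSpaceProd G G s s)
      (@instTopologicalSpaceProd G G τ τ) τ _ _ hmulττ hpair
    have heq : ((fun x : G => x⁻¹) ∘ fun p : G × G => p.1 * p.2)
        = ((fun p : G × G => p.1 * p.2) ∘ fun p : G × G => (p.2⁻¹, p.1⁻¹)) := by
      funext p; simp [mul_inv_rev]
    rw [heq]
    exact this
  have hmul : @Continuous (G × G) G (@instTopologicalSpaceProd G G s s) s
      (fun p : G × G => p.1 * p.2) := continuous_inf_rng.mpr ⟨hmulτ, hmulσ⟩
  have hinvσ : @Continuous G G s σ (fun x : G => x⁻¹) := by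
    rw [hσdef]
    refine continuous_induced_rng.mpr ?_
    simpa [Function.comp] using hid
  have hinv : @Continuous G G s s (fun x : G => x⁻¹) := continuous_inf_rng.mpr ⟨hinvτ, hinvσ⟩
  exact @IsTopologicalGroup.mk G s _ ⟨hmul⟩ ⟨hinv⟩

/-- Let `(G, τ)` be a paratopological group and let `τ♯` be the smallest topology on `G`
containing `τ` together with the inverses `U⁻¹` of all `τ`-open sets `U` (i.e. the join of
`τ` and the pullback of `τ` under inversion; recall that in Mathlib's order on topologies
the topology generated by the union of two topologies is their infimum `⊓`).
Then `(G, τ♯)` is a topological group, the sets `U ∩ U⁻¹` with `U` a `τ`-neighborhood of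
the identity form a neighborhood base at the identity for `τ♯`, and if `τ` is `T₀` then
`τ♯` is Hausdorff. -/
theorem group_coreflection_topological_group {G : Type*} [Group G]
    (τ : TopologicalSpace G) (hτ : @ContinuousMul G τ _)
    (sharp : TopologicalSpace G)
    (hsharp : sharp = τ ⊓ TopologicalSpace.induced (fun x : G => x⁻¹) τ) :
    @IsTopologicalGroup G sharp _ ∧
      (@nhds G sharp 1).HasBasis (fun U : Set G => U ∈ @nhds G τ 1)
        (fun U : Set G => U ∩ U⁻¹) ∧
      (@T0Space G τ → @T2Space G sharp) := by
  subst hsharp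
  have htg := tg_aux τ hτ
  refine ⟨htg, ?_, ?_⟩
  · have hn : @nhds G (τ ⊓ TopologicalSpace.induced (fun x : G => x⁻¹) τ) 1
        = @nhds G τ 1 ⊓ Filter.comap (fun x : G => x⁻¹) (@nhds G τ 1) := by
      rw [@nhds_inf G τ (TopologicalSpace.induced (fun x : G => x⁻¹) τ) 1,
        @nhds_induced G G τ (fun x : G => x⁻¹) 1, inv_one]
    rw [hn]
    have hb := ((@nhds G τ 1).basis_sets.inf ((@nhds G τ 1).basis_sets.comap
      (fun x : G => x⁻¹)))
    refine hb.to_hasBasis ?_ ?_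
    · rintro ⟨U, V⟩ ⟨hU, hV⟩
      refine ⟨U ∩ V, Filter.inter_mem hU hV, ?_⟩
      intro x hx
      exact ⟨hx.1.1, hx.2.2⟩
    · intro U hU
      exact ⟨(U, U), ⟨hU, hU⟩, fun x hx => ⟨hx.1, hx.2⟩⟩
  · intro h0
    have h0s : @T0Space G (τ ⊓ TopologicalSpace.induced (fun x : G => x⁻¹) τ) := by
      refine @T0Space.mk G (τ ⊓ TopologicalSpace.induced (fun x : G => x⁻¹) τ) ?_
      intro x y hxy
      refine h0.t0 ((@inseparable_iff_forall_isOpen G τ x y).mpr ?_)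
      intro U hUopen
      exact (@inseparable_iff_forall_isOpen G (τ ⊓ TopologicalSpace.induced (fun x : G => x⁻¹) τ) x y).mp hxy U (hUopen.mono inf_le_left)
    letI := τ ⊓ TopologicalSpace.induced (fun x : G => x⁻¹) τ
    haveI := htg
    haveI := h0s
    infer_instance
end

section
/- Let ι be an index set of cardinality ℵ₁, let Σ be the subgroup of countably supported elements of 𝕋^ι, and let c ∈ 𝕋^ι be an element of infinite order such that the cyclic subgroup generated by c meets Σ only in the identity. Then there exists a topology τ on the group G = Σ × ℤ such that: (i) multiplication on G is jointly continuous with respect to τ; (ii) τ is Hausdorff; and (iii) for every g ∈ G the family of translates g·O_U, where U ranges over the open neighborhoods of the identity in 𝕋^ι, is a neighborhood basis at g for τ. -/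
open Filter Set Topology Pointwise


/-- The subgroup `Σ` of countably supported elements of the product group `𝕋^ι`,
where `𝕋 = Circle` is the circle group. -/
noncomputable def SigmaSubgroup (ι : Type*) : Subgroup (ι → Circle) where
  carrier := {x | {i | x i ≠ 1}.Countable}
  one_mem' := by simp
  mul_mem' := by
    intro a b ha hb
    refine (ha.union hb).mono ?_
    intro i hi
    by_contra h
    simp only [Set.mem_union, Set.mem_setOf_eq, not_or, not_not] at h
    exact hi (by simp [Pi.mul_apply, h.1, h.2])
  inv_mem' := by
    intro a ha
    refine ha.mono ?_
    intro i hi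
    simp only [Set.mem_setOf_eq, Pi.inv_apply, ne_eq, inv_eq_one] at hi ⊢
    exact hi

/-- For `c ∈ 𝕋^ι` and `U ⊆ 𝕋^ι`, the set `O_U = ⋃_{n ∈ ℕ} ((cⁿU ∩ Σ) × {n})`, regarded
as a subset of the group `G = Σ × ℤ` (we use `Multiplicative ℤ` so that `G` is a
multiplicative group; `ℕ` is identified with `{0, 1, 2, …} ⊆ ℤ`). -/
def OSet {ι : Type*} (c : ι → Circle) (U : Set (ι → Circle)) :
    Set (↥(SigmaSubgroup ι) × Multiplicative ℤ) :=
  {p | ∃ n : ℕ, p.2 = Multiplicative.ofAdd (n : ℤ) ∧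
    ∃ u ∈ U, (p.1 : ι → Circle) = c ^ n * u}

section aux

variable {ι : Type*} (c : ι → Circle)

lemma one_mem_OSet {U : Set (ι → Circle)} (hU : (1 : ι → Circle) ∈ U) :
    (1 : ↥(SigmaSubgroup ι) × Multiplicative ℤ) ∈ OSet c U :=
  ⟨0, by simp, 1, hU, by simp⟩

lemma OSet_mono {U V : Set (ι → Circle)} (h : U ⊆ V) : OSet c U ⊆ OSet c V := by
  rintro p ⟨n, hn, u, hu, hpu⟩
  exact ⟨n, hn, u, h hu, hpu⟩

lemma mul_mem_OSet {U V : Set (ι → Circle)} {p q : ↥(SigmaSubgroup ι) × Multiplicative ℤ}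
    (hp : p ∈ OSet c U) (hq : q ∈ OSet c V) : p * q ∈ OSet c (U * V) := by
  obtain ⟨m, hm, u, hu, hpu⟩ := hp
  obtain ⟨n, hn, v, hv, hqv⟩ := hq
  refine ⟨m + n, ?_, u * v, Set.mul_mem_mul hu hv, ?_⟩
  · rw [Prod.snd_mul, hm, hn, ← ofAdd_add]
    push_cast
    rfl
  · rw [Prod.fst_mul, Subgroup.coe_mul, hpu, hqv, pow_add]
    exact mul_mul_mul_comm (c ^ m) u (c ^ n) v

/-- The candidate neighborhood filter at `g`. -/
def nhdsFun (g : ↥(SigmaSubgroup ι) × Multiplicative ℤ) :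
    Filter (↥(SigmaSubgroup ι) × Multiplicative ℤ) :=
  ⨅ U ∈ {U : Set (ι → Circle) | IsOpen U ∧ (1 : ι → Circle) ∈ U},
    𝓟 ((fun p => g * p) '' OSet c U)

lemma hasBasis_nhdsFun (g : ↥(SigmaSubgroup ι) × Multiplicative ℤ) :
    (nhdsFun c g).HasBasis
      (fun U : Set (ι → Circle) => IsOpen U ∧ (1 : ι → Circle) ∈ U)
      (fun U => (fun p => g * p) '' OSet c U) := by
  refine Filter.hasBasis_biInf_principal ?_ ⟨univ, isOpen_univ, mem_univ _⟩
  rintro U ⟨hUo, hU1⟩ V ⟨hVo, hV1⟩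
  exact ⟨U ∩ V, ⟨hUo.inter hVo, hU1, hV1⟩,
    Set.image_mono (OSet_mono c inter_subset_left),
    Set.image_mono (OSet_mono c inter_subset_right)⟩

lemma nhdsFun_pure (g : ↥(SigmaSubgroup ι) × Multiplicative ℤ)
    {U : Set (ι → Circle)} (hU : IsOpen U ∧ (1 : ι → Circle) ∈ U) :
    g ∈ (fun p => g * p) '' OSet c U :=
  ⟨1, one_mem_OSet c hU.2, mul_one g⟩

lemma nhdsFun_open (g : ↥(SigmaSubgroup ι) × Multiplicative ℤ)
    {U : Set (ι → Circle)} (hU : IsOpen U ∧ (1 : ι → Circle) ∈ U) :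
    ∀ᶠ x in nhdsFun c g, (fun p => g * p) '' OSet c U ∈ nhdsFun c x := by
  obtain ⟨V, hVo, hV1, hVV⟩ := exists_open_nhds_one_mul_subset (hU.1.mem_nhds hU.2)
  filter_upwards [(hasBasis_nhdsFun c g).mem_of_mem ⟨hVo, hV1⟩] with x hx
  obtain ⟨p, hp, rfl⟩ := hx
  refine (hasBasis_nhdsFun c (g * p)).mem_iff.mpr ⟨V, ⟨hVo, hV1⟩, ?_⟩
  rintro _ ⟨q, hq, rfl⟩
  exact ⟨p * q, OSet_mono c hVV (mul_mem_OSet c hp hq), (mul_assoc g p q).symm⟩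

lemma nhds_mkOfNhds_eq (g : ↥(SigmaSubgroup ι) × Multiplicative ℤ) :
    @nhds _ (TopologicalSpace.mkOfNhds (nhdsFun c)) g = nhdsFun c g :=
  TopologicalSpace.nhds_mkOfNhds_of_hasBasis (hasBasis_nhdsFun c)
    (fun a _ h => nhdsFun_pure c a h) (fun a _ h => nhdsFun_open c a h) g

end aux
/-- Let `ι` have cardinality `ℵ₁`, let `Σ ≤ 𝕋^ι` be the subgroup of countably supported
elements and let `c ∈ 𝕋^ι` have infinite order with `⟨c⟩ ∩ Σ = {1}`.  Then there is a
topology `τ` on `G = Σ × ℤ` such that multiplication on `G` is jointly continuous, `τ` is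
Hausdorff, and for every `g ∈ G` the translates `g · O_U`, with `U` ranging over the open
neighborhoods of the identity of `𝕋^ι`, form a neighborhood basis at `g` for `τ`. -/
theorem exists_hausdorff_paratopological_topology_on_sigma_times_int
    (ι : Type u) (hι : Cardinal.mk ι = Cardinal.aleph 1)
    (c : ι → Circle) (hc : ¬ IsOfFinOrder c)
    (hcSigma : Subgroup.zpowers c ⊓ SigmaSubgroup ι = ⊥) :
    ∃ τ : TopologicalSpace (↥(SigmaSubgroup ι) × Multiplicative ℤ),
      @ContinuousMul _ τ _ ∧ @T2Space _ τ ∧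
      ∀ g : ↥(SigmaSubgroup ι) × Multiplicative ℤ,
        (@nhds _ τ g).HasBasis
          (fun U : Set (ι → Circle) => IsOpen U ∧ (1 : ι → Circle) ∈ U)
          (fun U : Set (ι → Circle) => (fun p => g * p) '' OSet c U) := by
  letI τ : TopologicalSpace (↥(SigmaSubgroup ι) × Multiplicative ℤ) :=
    TopologicalSpace.mkOfNhds (nhdsFun c)
  have hnhds : ∀ g, @nhds _ τ g = nhdsFun c g := nhds_mkOfNhds_eq c
  have hbasis : ∀ g : ↥(SigmaSubgroup ι) × Multiplicative ℤ,
      (@nhds _ τ g).HasBasis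
        (fun U : Set (ι → Circle) => IsOpen U ∧ (1 : ι → Circle) ∈ U)
        (fun U : Set (ι → Circle) => (fun p => g * p) '' OSet c U) := by
    intro g
    rw [hnhds g]
    exact hasBasis_nhdsFun c g
  refine ⟨τ, ?_, ?_, hbasis⟩
  · -- joint continuity of multiplication
    constructor
    rw [continuous_iff_continuousAt]
    rintro ⟨a, b⟩
    unfold ContinuousAt
    rw [nhds_prod_eq]
    rw [((hbasis a).prod (hbasis b)).tendsto_iff (hbasis (a * b))]
    rintro U ⟨hUo, hU1⟩
    obtain ⟨V, hVo, hV1, hVV⟩ := exists_open_nhds_one_mul_subset (hUo.mem_nhds hU1)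
    refine ⟨(V, V), ⟨⟨hVo, hV1⟩, ⟨hVo, hV1⟩⟩, ?_⟩
    rintro ⟨x, y⟩ ⟨⟨p, hp, rfl⟩, ⟨q, hq, rfl⟩⟩
    exact ⟨p * q, OSet_mono c hVV (mul_mem_OSet c hp hq),
      (mul_mul_mul_comm a p b q).symm⟩
  · -- Hausdorff
    rw [t2Space_iff_disjoint_nhds]
    intro x y hne
    set d : ↥(SigmaSubgroup ι) × Multiplicative ℤ := y⁻¹ * x with hd
    set z : ι → Circle := (d.1 : ι → Circle) with hzdef
    set k : ℤ := Multiplicative.toAdd d.2 with hkdef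
    have ht : c ^ (-k) * z ≠ 1 := by
      intro h
      have hzk : z = c ^ k := by
        have h' := congrArg (fun w => c ^ k * w) h
        simp only [mul_one] at h'
        rw [← h', ← mul_assoc, ← zpow_add]
        simp
      have hmem : c ^ k ∈ Subgroup.zpowers c ⊓ SigmaSubgroup ι :=
        ⟨Subgroup.zpow_mem (Subgroup.zpowers c) (Subgroup.mem_zpowers c) k,
          hzk ▸ SetLike.coe_mem d.1⟩
      rw [hcSigma, Subgroup.mem_bot] at hmem
      have hk0 : k = 0 := by
        have hinj : Function.Injective fun n : ℤ => c ^ n :=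
          injective_zpow_iff_not_isOfFinOrder.mpr hc
        have : c ^ k = c ^ (0 : ℤ) := by rw [hmem, zpow_zero]
        exact hinj this
      have hd1 : d.1 = 1 := by
        have : (d.1 : ι → Circle) = 1 := by rw [← hzdef, hzk, hk0, zpow_zero]
        exact_mod_cast this
      have hd2 : d.2 = 1 := by
        have : Multiplicative.toAdd d.2 = Multiplicative.toAdd (1 : Multiplicative ℤ) := by
          rw [← hkdef, hk0]; rfl
        exact Multiplicative.toAdd.injective this
      have hd' : y⁻¹ * x = 1 := hd ▸ Prod.ext hd1 hd2
      rw [inv_mul_eq_one, eq_comm] at hd'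
      exact hne hd'
    set t : ι → Circle := c ^ (-k) * z with htdef
    have hs : IsOpen {p : (ι → Circle) × (ι → Circle) | p.2 * p.1⁻¹ ≠ t} := by
      have : Continuous fun p : (ι → Circle) × (ι → Circle) => p.2 * p.1⁻¹ :=
        continuous_snd.mul continuous_fst.inv
      exact isOpen_compl_singleton.preimage this
    have h11 : ((1 : ι → Circle), (1 : ι → Circle)) ∈
        {p : (ι → Circle) × (ι → Circle) | p.2 * p.1⁻¹ ≠ t} := by
      simp only [Set.mem_setOf_eq, inv_one, mul_one]
      exact fun h => ht h.symm
    obtain ⟨U, V, hUo, hVo, hU1, hV1, hUV⟩ := isOpen_prod_iff.mp hs 1 1 h11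
    set W := U ∩ V with hW
    refine Filter.disjoint_of_disjoint_of_mem ?_
      ((hbasis x).mem_of_mem ⟨hUo.inter hVo, hU1, hV1⟩)
      ((hbasis y).mem_of_mem ⟨hUo.inter hVo, hU1, hV1⟩)
    rw [Set.disjoint_left]
    rintro a ⟨p, hp, rfl⟩ ⟨q, hq, heq⟩
    -- heq : y * q = x * p
    have hdp : d * p = q := by
      simp only [] at heq
      rw [hd, mul_assoc, ← heq]
      group
    obtain ⟨m, hm, u, hu, hpu⟩ := hq
    obtain ⟨n, hn, v, hv, hqv⟩ := hp
    -- first components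
    have h1 : z * (c ^ ((n : ℤ)) * v) = c ^ ((m : ℤ)) * u := by
      have := congrArg (fun w : ↥(SigmaSubgroup ι) × Multiplicative ℤ =>
        ((w.1 : ι → Circle))) hdp
      simp only [Prod.fst_mul, Subgroup.coe_mul] at this
      rw [hpu, hqv] at this
      rw [zpow_natCast, zpow_natCast]
      exact this
    -- second components
    have h2 : k + (n : ℤ) = m := by
      have := congrArg (fun w : ↥(SigmaSubgroup ι) × Multiplicative ℤ =>
        Multiplicative.toAdd w.2) hdp
      simp only [Prod.snd_mul, toAdd_mul] at this
      rw [hm, hn] at this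
      simpa using this
    have hvu : u * v⁻¹ = t := by
      rw [mul_inv_eq_iff_eq_mul]
      have hu' : u = c ^ (-(m : ℤ)) * (z * (c ^ ((n : ℤ)) * v)) := by
        rw [h1]; group
      have hk' : -k = (n : ℤ) - m := by omega
      rw [hu', htdef, hk', zpow_sub]
      simp only [zpow_neg]
      simp [mul_comm, mul_left_comm, mul_assoc]
    have : (v, u) ∈ U ×ˢ V := ⟨hv.1, hu.2⟩
    exact hUV this hvu
end

section
/- Let ι be an index set of cardinality ℵ₁, let Σ be the subgroup of countably supported elements of 𝕋^ι, and let c ∈ 𝕋^ι be an element of infinite order such that the cyclic subgroup generated by c meets Σ only in the identity. Suppose τ is a topology on G = Σ × ℤ making multiplication jointly continuous such that for every g ∈ G the translates g·O_U, for U an open neighborhood of the identity in 𝕋^ι, form a neighborhood basis at g. Then the τ-closure of the subgroup H = Σ × {0} equals Σ × {n ∈ ℤ : n ≤ 0}; in particular, the closure of H in (G, τ) is not a subgroup of G. -/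
lemma exists_good_u {ι : Type*} (c : ι → Circle) {U : Set (ι → Circle)}
    (hU : IsOpen U) (h1 : (1 : ι → Circle) ∈ U) (n : ℕ) :
    ∃ u ∈ U, c ^ n * u ∈ SigmaSubgroup ι := by
  classical
  obtain ⟨I, V, hV, hsub⟩ := isOpen_pi_iff.mp hU 1 h1
  refine ⟨fun i => if i ∈ I then 1 else (c i)⁻¹ ^ n, ?_, ?_⟩
  · apply hsub
    intro i hi
    have hi' : i ∈ I := hi
    simpa [hi'] using (hV i hi').2
  · show {i | (c ^ n * fun i => if i ∈ I then 1 else (c i)⁻¹ ^ n) i ≠ 1}.Countable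
    refine I.countable_toSet.mono ?_
    intro i hi
    by_contra hiI
    have hiI' : i ∉ I := fun h => hiI h
    exact hi (by simp [Pi.mul_apply, Pi.pow_apply, hiI'])

/-- Let `ι` have cardinality `ℵ₁`, let `Σ ≤ 𝕋^ι` be the subgroup of countably supported
elements and let `c ∈ 𝕋^ι` have infinite order with `⟨c⟩ ∩ Σ = {1}`.  If `τ` is a topology
on `G = Σ × ℤ` making multiplication jointly continuous such that for every `g ∈ G` the
translates `g · O_U`, with `U` an open neighborhood of the identity of `𝕋^ι`, form a
neighborhood basis at `g`, then the `τ`-closure of the subgroup `H = Σ × {0}` equals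
`Σ × {n ∈ ℤ | n ≤ 0}`; in particular this closure is not a subgroup of `G`. -/
theorem closure_of_sigma_times_zero
    (ι : Type u) (hι : Cardinal.mk ι = Cardinal.aleph 1)
    (c : ι → Circle) (hc : ¬ IsOfFinOrder c)
    (hcSigma : Subgroup.zpowers c ⊓ SigmaSubgroup ι = ⊥)
    (τ : TopologicalSpace (↥(SigmaSubgroup ι) × Multiplicative ℤ))
    (hmul : @ContinuousMul _ τ _)
    (hbasis : ∀ g : ↥(SigmaSubgroup ι) × Multiplicative ℤ,
      (@nhds _ τ g).HasBasis
        (fun U : Set (ι → Circle) => IsOpen U ∧ (1 : ι → Circle) ∈ U)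
        (fun U : Set (ι → Circle) => (fun p => g * p) '' OSet c U)) :
    @closure _ τ {p : ↥(SigmaSubgroup ι) × Multiplicative ℤ | p.2 = 1} =
        {p : ↥(SigmaSubgroup ι) × Multiplicative ℤ | Multiplicative.toAdd p.2 ≤ 0} ∧
      ¬ ∃ K : Subgroup (↥(SigmaSubgroup ι) × Multiplicative ℤ),
        (K : Set (↥(SigmaSubgroup ι) × Multiplicative ℤ)) =
          @closure _ τ {p : ↥(SigmaSubgroup ι) × Multiplicative ℤ | p.2 = 1} := by
  have hclos : @closure _ τ {p : ↥(SigmaSubgroup ι) × Multiplicative ℤ | p.2 = 1} =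
      {p : ↥(SigmaSubgroup ι) × Multiplicative ℤ | Multiplicative.toAdd p.2 ≤ 0} := by
    ext p
    rw [mem_closure_iff_nhds_basis (hbasis p)]
    constructor
    · intro h
      obtain ⟨y, hy1, hy2⟩ := h Set.univ ⟨isOpen_univ, Set.mem_univ _⟩
      obtain ⟨q, hq, rfl⟩ := hy2
      obtain ⟨n, hn, -⟩ := hq
      have : Multiplicative.toAdd p.2 + (n : ℤ) = 0 := by
        have := hy1
        simp only [Set.mem_setOf_eq, Prod.snd_mul, hn] at this
        have := congrArg Multiplicative.toAdd this
        simpa using this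
      simp only [Set.mem_setOf_eq]
      omega
    · intro hp U ⟨hU, h1U⟩
      set n : ℕ := (-Multiplicative.toAdd p.2).toNat with hn
      obtain ⟨u, huU, hmem⟩ := exists_good_u c hU h1U n
      refine ⟨p * (⟨c ^ n * u, hmem⟩, Multiplicative.ofAdd (n : ℤ)), ?_, ?_⟩
      · simp only [Set.mem_setOf_eq, Prod.snd_mul]
        have : (n : ℤ) = -Multiplicative.toAdd p.2 := by
          simp only [Set.mem_setOf_eq] at hp
          omega
        rw [this]
        have : Multiplicative.toAdd (p.2 * Multiplicative.ofAdd (-Multiplicative.toAdd p.2)) = 0 := by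
          simp
        simpa using congrArg Multiplicative.ofAdd this
      · exact ⟨(⟨c ^ n * u, hmem⟩, Multiplicative.ofAdd (n : ℤ)), ⟨n, rfl, u, huU, rfl⟩, rfl⟩
  refine ⟨hclos, ?_⟩
  rintro ⟨K, hK⟩
  rw [hclos] at hK
  have h1 : ((1 : ↥(SigmaSubgroup ι)), Multiplicative.ofAdd (-1 : ℤ)) ∈ K := by
    rw [← SetLike.mem_coe, hK]; simp
  have h2 := K.inv_mem h1
  rw [← SetLike.mem_coe, hK] at h2
  simp at h2
end

section
/- Let ι be an index set of cardinality ℵ₁, let Σ be the subgroup of countably supported elements of 𝕋^ι, and let c ∈ 𝕋^ι be an element of infinite order such that the cyclic subgroup generated by c meets Σ only in the identity. Suppose τ is a topology on G = Σ × ℤ making multiplication jointly continuous such that for every g ∈ G the translates g·O_U, for U an open neighborhood of the identity in 𝕋^ι, form a neighborhood basis at g. Then the subspace topology induced by τ on the subgroup H = Σ × {0} coincides with the topology Σ inherits from the product 𝕋^ι; hence the map x ↦ (x, 0) is an isomorphism of topological groups from Σ onto H, and H with the subspace topology is a topological group. -/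
open Topology Filter


/-- The subgroup `H = Σ × {0}` of `G = Σ × ℤ`. -/
noncomputable def HSubgroup (ι : Type*) :
    Subgroup (↥(SigmaSubgroup ι) × Multiplicative ℤ) :=
  (⊤ : Subgroup ↥(SigmaSubgroup ι)).prod (⊥ : Subgroup (Multiplicative ℤ))

lemma key {ι : Type*} (c : ι → Circle) (x : ↥(SigmaSubgroup ι)) (U : Set (ι → Circle)) :
    (fun y : ↥(SigmaSubgroup ι) => ((y, 1) : ↥(SigmaSubgroup ι) × Multiplicative ℤ)) ⁻¹'
      ((fun p => ((x, 1) : ↥(SigmaSubgroup ι) × Multiplicative ℤ) * p) '' OSet c U) =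
    Subtype.val ⁻¹' ((fun z => (x : ι → Circle) * z) '' U) := by
  ext y
  simp only [Set.mem_preimage, Set.mem_image, Prod.exists]
  constructor
  · rintro ⟨a, b, hab, heq⟩
    obtain ⟨n, hn, u, hu, ha⟩ := hab
    rw [Prod.mk_mul_mk, Prod.mk.injEq] at heq
    obtain ⟨h1, h2⟩ := heq
    rw [one_mul] at h2
    rw [h2] at hn
    have hn0 : n = 0 := by
      have := congrArg Multiplicative.toAdd hn
      simpa using this.symm
    subst hn0
    simp only [pow_zero, one_mul] at ha
    refine ⟨u, hu, ?_⟩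
    have h1' : ((x * a : ↥(SigmaSubgroup ι)) : ι → Circle) = (y : ι → Circle) := by
      rw [h1]
    simpa [ha] using h1'
  · rintro ⟨u, hu, huy⟩
    refine ⟨x⁻¹ * y, 1, ⟨0, by simp, u, hu, ?_⟩, ?_⟩
    · push_cast
      simp only [pow_zero, one_mul]
      rw [← huy]
      simp [mul_assoc]
    · simp [Prod.ext_iff]

/-- Let `ι` have cardinality `ℵ₁`, let `Σ ≤ 𝕋^ι` be the subgroup of countably supported
elements and let `c ∈ 𝕋^ι` have infinite order with `⟨c⟩ ∩ Σ = {1}`.  If `τ` is a topology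
on `G = Σ × ℤ` making multiplication jointly continuous such that for every `g ∈ G` the
translates `g · O_U`, with `U` an open neighborhood of the identity of `𝕋^ι`, form a
neighborhood basis at `g`, then the subspace topology induced by `τ` on `H = Σ × {0}`
coincides with the topology `Σ` inherits from `𝕋^ι`: the map `x ↦ (x, 0)` is a group
homomorphism of `Σ` onto `H` which is a topological embedding, and `H` with the subspace
topology is a topological group. -/
theorem sigma_times_zero_is_topological_subgroup
    (ι : Type u) (hι : Cardinal.mk ι = Cardinal.aleph 1)
    (c : ι → Circle) (hc : ¬ IsOfFinOrder c)
    (hcSigma : Subgroup.zpowers c ⊓ SigmaSubgroup ι = ⊥)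
    (τ : TopologicalSpace (↥(SigmaSubgroup ι) × Multiplicative ℤ))
    (hmul : @ContinuousMul _ τ _)
    (hbasis : ∀ g : ↥(SigmaSubgroup ι) × Multiplicative ℤ,
      (@nhds _ τ g).HasBasis
        (fun U : Set (ι → Circle) => IsOpen U ∧ (1 : ι → Circle) ∈ U)
        (fun U : Set (ι → Circle) => (fun p => g * p) '' OSet c U)) :
    (∀ x y : ↥(SigmaSubgroup ι),
        ((x * y, 1) : ↥(SigmaSubgroup ι) × Multiplicative ℤ) = (x, 1) * (y, 1)) ∧
      Set.range (fun x : ↥(SigmaSubgroup ι) =>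
        ((x, 1) : ↥(SigmaSubgroup ι) × Multiplicative ℤ)) = (HSubgroup ι : Set _) ∧
      @Topology.IsEmbedding _ _ _ τ (fun x : ↥(SigmaSubgroup ι) =>
        ((x, 1) : ↥(SigmaSubgroup ι) × Multiplicative ℤ)) ∧
      @IsTopologicalGroup ↥(HSubgroup ι)
        (TopologicalSpace.induced (Subtype.val : ↥(HSubgroup ι) → _) τ) _ := by

  classical
  have hinj : Function.Injective (fun x : ↥(SigmaSubgroup ι) =>
      ((x, 1) : ↥(SigmaSubgroup ι) × Multiplicative ℤ)) := by
    intro a b h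
    simpa [Prod.ext_iff] using h
  have h1 : (𝓝 (1 : ι → Circle)).HasBasis
      (fun U : Set (ι → Circle) => IsOpen U ∧ (1 : ι → Circle) ∈ U) id := by
    exact (nhds_basis_opens (1 : ι → Circle)).congr (fun _ => and_comm) (fun _ _ => rfl)
  have hind : @Topology.IsInducing _ _ _ τ (fun x : ↥(SigmaSubgroup ι) =>
      ((x, 1) : ↥(SigmaSubgroup ι) × Multiplicative ℤ)) := by
    rw [@Topology.isInducing_iff_nhds _ _ _ τ]
    intro x
    have h2 : (𝓝 ((x : ι → Circle))).HasBasis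
        (fun U : Set (ι → Circle) => IsOpen U ∧ (1 : ι → Circle) ∈ U)
        (fun U => (fun z => (x : ι → Circle) * z) '' U) := by
      rw [← map_mul_left_nhds_one ((x : ι → Circle))]
      exact h1.map _
    have h3 : (𝓝 x).HasBasis
        (fun U : Set (ι → Circle) => IsOpen U ∧ (1 : ι → Circle) ∈ U)
        (fun U => Subtype.val ⁻¹' ((fun z => (x : ι → Circle) * z) '' U)) := by
      rw [nhds_subtype]
      exact h2.comap _
    have h4 := (hbasis ((x, 1) : ↥(SigmaSubgroup ι) × Multiplicative ℤ)).comap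
      (fun y : ↥(SigmaSubgroup ι) => ((y, 1) : ↥(SigmaSubgroup ι) × Multiplicative ℤ))
    refine h3.eq_of_same_basis (h4.congr (fun _ => Iff.rfl) ?_)
    intro U _
    exact key c x U
  have hrange : Set.range (fun x : ↥(SigmaSubgroup ι) =>
      ((x, 1) : ↥(SigmaSubgroup ι) × Multiplicative ℤ)) = (HSubgroup ι : Set _) := by
    ext p
    constructor
    · rintro ⟨x, rfl⟩
      exact Subgroup.mem_prod.2 ⟨Subgroup.mem_top x, Subgroup.mem_bot.2 rfl⟩
    · intro hp
      have h2 : p.2 = 1 := Subgroup.mem_bot.1 (Subgroup.mem_prod.1 hp).2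
      exact ⟨p.1, Prod.ext rfl h2.symm⟩
  refine ⟨fun x y => rfl, hrange, ⟨hind, hinj⟩, ?_⟩
  -- topological group structure on H
  have hmem2 : ∀ h : ↥(HSubgroup ι), (h : ↥(SigmaSubgroup ι) × Multiplicative ℤ).2 = 1 :=
    fun h => Subgroup.mem_bot.1 (Subgroup.mem_prod.1 h.2).2
  set tH : TopologicalSpace ↥(HSubgroup ι) :=
    TopologicalSpace.induced (Subtype.val : ↥(HSubgroup ι) → _) τ with htH
  have hval : @Continuous _ _ tH τ (Subtype.val : ↥(HSubgroup ι) → _) := by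
    rw [htH]; exact continuous_induced_dom
  set σ : ↥(HSubgroup ι) → ↥(SigmaSubgroup ι) := fun h =>
    (h : ↥(SigmaSubgroup ι) × Multiplicative ℤ).1 with hσdef
  have hσ : @Continuous _ _ tH _ σ := by
    have hts : (instTopologicalSpaceSubtype : TopologicalSpace ↥(SigmaSubgroup ι)) =
        TopologicalSpace.induced _ τ := hind.eq_induced
    rw [hts]
    apply continuous_induced_rng.2
    have : ((fun x : ↥(SigmaSubgroup ι) =>
        ((x, 1) : ↥(SigmaSubgroup ι) × Multiplicative ℤ)) ∘ σ) =
        (Subtype.val : ↥(HSubgroup ι) → _) := by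
      funext h
      exact Prod.ext rfl (hmem2 h).symm
    show @Continuous _ _ tH τ _
    rw [this]
    exact hval
  set φ : ↥(SigmaSubgroup ι) → ↥(HSubgroup ι) := fun x =>
    ⟨(x, 1), Subgroup.mem_prod.2 ⟨Subgroup.mem_top x, Subgroup.mem_bot.2 rfl⟩⟩ with hφdef
  have hφ : @Continuous _ _ _ tH φ := by
    rw [htH]
    apply continuous_induced_rng.2
    exact @Topology.IsInducing.continuous _ _ _ τ _ hind
  have cmul : @Continuous _ _ (@instTopologicalSpaceProd _ _ tH tH) tH
      (fun p : ↥(HSubgroup ι) × ↥(HSubgroup ι) => p.1 * p.2) := by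
    rw [htH]
    apply continuous_induced_rng.2
    have : ((Subtype.val : ↥(HSubgroup ι) → _) ∘
        fun p : ↥(HSubgroup ι) × ↥(HSubgroup ι) => p.1 * p.2) =
        (fun q : (↥(SigmaSubgroup ι) × Multiplicative ℤ) × _ => q.1 * q.2) ∘
        (fun p : ↥(HSubgroup ι) × ↥(HSubgroup ι) => ((p.1 : _), (p.2 : _))) := rfl
    rw [this]
    exact hmul.continuous_mul.comp
      ((hval.comp (@continuous_fst _ _ tH tH)).prodMk (hval.comp (@continuous_snd _ _ tH tH)))
  have cinv : @Continuous _ _ tH tH (fun h : ↥(HSubgroup ι) => h⁻¹) := by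
    have heq : (fun h : ↥(HSubgroup ι) => h⁻¹) = φ ∘ (fun x => x⁻¹) ∘ σ := by
      funext h
      refine Subtype.ext (Prod.ext rfl ?_)
      show (h : ↥(SigmaSubgroup ι) × Multiplicative ℤ).2⁻¹ = 1
      rw [hmem2 h, inv_one]
    rw [heq]
    exact hφ.comp (continuous_inv.comp hσ)
  exact @IsTopologicalGroup.mk _ tH _ ⟨cmul⟩ ⟨cinv⟩
end

section
/- Let ι be an index set of cardinality ℵ₁, let Σ be the subgroup of countably supported elements of 𝕋^ι, and let c ∈ 𝕋^ι be an element of infinite order such that the cyclic subgroup generated by c meets Σ only in the identity. Suppose τ is a topology on G = Σ × ℤ making multiplication jointly continuous such that for every g ∈ G the translates g·O_U, for U an open neighborhood of the identity in 𝕋^ι, form a neighborhood basis at g. Then the group coreflection topology τ^♯ (the smallest topology containing τ and the inverses of all τ-open sets) equals the product topology on Σ × ℤ, where Σ carries the subspace topology from 𝕋^ι and ℤ is discrete. -/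
open Filter Set Topology
lemma mem_left_image {G : Type*} [Group G] (g x : G) (A : Set G) :
    x ∈ (fun p => g * p) '' A ↔ g⁻¹ * x ∈ A := by
  constructor
  · rintro ⟨p, hp, rfl⟩; simpa using hp
  · intro h; exact ⟨g⁻¹ * x, h, by group⟩

lemma OSet_inter_inv {ι : Type*} (c : ι → Circle) (U V : Set (ι → Circle))
    (y : ↥(SigmaSubgroup ι) × Multiplicative ℤ) :
    (y ∈ OSet c U ∧ y⁻¹ ∈ OSet c V) ↔
      (y.2 = 1 ∧ (y.1 : ι → Circle) ∈ U ∩ V⁻¹) := by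
  constructor
  · rintro ⟨⟨n, hn, u, hu, h1⟩, ⟨m, hm, v, hv, h2⟩⟩
    have hm' : (y.2)⁻¹ = Multiplicative.ofAdd (m : ℤ) := hm
    rw [hn] at hm'
    have : -(n : ℤ) = (m : ℤ) := by
      rw [← ofAdd_neg] at hm'
      exact Multiplicative.ofAdd.injective hm'
    have hn0 : n = 0 := by omega
    have hm0 : m = 0 := by omega
    subst hn0; subst hm0
    simp only [pow_zero, one_mul] at h1 h2
    refine ⟨by simpa using hn, ?_, ?_⟩
    · rw [h1]; exact hu
    · have : ((y.1 : ι → Circle))⁻¹ = v := by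
        simpa using h2
      rw [Set.mem_inv, this]; exact hv
  · rintro ⟨h2, hU, hV⟩
    constructor
    · exact ⟨0, by simpa using h2, (y.1 : ι → Circle), hU, by simp⟩
    · exact ⟨0, by simp [h2], ((y.1 : ι → Circle))⁻¹, hV, by simp⟩

/-- Let `ι` have cardinality `ℵ₁`, let `Σ ≤ 𝕋^ι` be the subgroup of countably supported
elements and let `c ∈ 𝕋^ι` have infinite order with `⟨c⟩ ∩ Σ = {1}`.  If `τ` is a topology
on `G = Σ × ℤ` making multiplication jointly continuous such that for every `g ∈ G` the
translates `g · O_U`, with `U` an open neighborhood of the identity of `𝕋^ι`, form a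
neighborhood basis at `g`, then the group coreflection topology `τ♯` (the smallest
topology containing `τ` and the inverses of all `τ`-open sets, i.e. `τ ⊓ induced (·⁻¹) τ`
in Mathlib's order on topologies) equals the product topology on `Σ × ℤ`, where `Σ`
carries the subspace topology from `𝕋^ι` and `ℤ` is discrete. -/
theorem group_coreflection_of_sigma_times_int_is_product
    (ι : Type u) (hι : Cardinal.mk ι = Cardinal.aleph 1)
    (c : ι → Circle) (hc : ¬ IsOfFinOrder c)
    (hcSigma : Subgroup.zpowers c ⊓ SigmaSubgroup ι = ⊥)
    (τ : TopologicalSpace (↥(SigmaSubgroup ι) × Multiplicative ℤ))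
    (hmul : @ContinuousMul _ τ _)
    (hbasis : ∀ g : ↥(SigmaSubgroup ι) × Multiplicative ℤ,
      (@nhds _ τ g).HasBasis
        (fun U : Set (ι → Circle) => IsOpen U ∧ (1 : ι → Circle) ∈ U)
        (fun U : Set (ι → Circle) => (fun p => g * p) '' OSet c U)) :
    τ ⊓ TopologicalSpace.induced
        (fun p : ↥(SigmaSubgroup ι) × Multiplicative ℤ => p⁻¹) τ =
      TopologicalSpace.induced
          (Prod.fst : ↥(SigmaSubgroup ι) × Multiplicative ℤ → ↥(SigmaSubgroup ι))
          inferInstance ⊓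
        TopologicalSpace.induced
          (Prod.snd : ↥(SigmaSubgroup ι) × Multiplicative ℤ → Multiplicative ℤ)
          (⊥ : TopologicalSpace (Multiplicative ℤ)) := by
  refine TopologicalSpace.ext_nhds (fun g => ?_)
  -- the common basis sets
  have key : ∀ U V : Set (ι → Circle),
      ((fun p => g * p) '' OSet c U) ∩
        ((fun p : ↥(SigmaSubgroup ι) × Multiplicative ℤ => p⁻¹) ⁻¹'
          ((fun p => g⁻¹ * p) '' OSet c V)) =
      (fun p => g * p) '' {p : ↥(SigmaSubgroup ι) × Multiplicative ℤ |
        p.2 = 1 ∧ (p.1 : ι → Circle) ∈ U ∩ V⁻¹} := by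
    intro U V
    ext x
    rw [Set.mem_inter_iff, Set.mem_preimage, mem_left_image, mem_left_image, mem_left_image]
    rw [show g⁻¹⁻¹ * x⁻¹ = (g⁻¹ * x)⁻¹ from (mul_inv _ _).symm]
    rw [Set.mem_setOf_eq]
    exact OSet_inter_inv c U V (g⁻¹ * x)
  have hL : (@nhds _ (τ ⊓ TopologicalSpace.induced
        (fun p : ↥(SigmaSubgroup ι) × Multiplicative ℤ => p⁻¹) τ) g).HasBasis
      (fun W : Set (ι → Circle) => IsOpen W ∧ (1 : ι → Circle) ∈ W)
      (fun W => (fun p => g * p) '' {p : ↥(SigmaSubgroup ι) × Multiplicative ℤ |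
        p.2 = 1 ∧ (p.1 : ι → Circle) ∈ W}) := by
    rw [_root_.nhds_inf, nhds_induced]
    refine ((hbasis g).inf ((hbasis g⁻¹).comap _)).to_hasBasis ?_ ?_
    · rintro ⟨U, V⟩ ⟨⟨hUo, hU1⟩, hVo, hV1⟩
      refine ⟨U ∩ V⁻¹, ⟨hUo.inter hVo.inv, hU1, by simpa using hV1⟩, ?_⟩
      rw [← key U V]
    · rintro W ⟨hWo, hW1⟩
      refine ⟨(W, W⁻¹), ⟨⟨hWo, hW1⟩, hWo.inv, by simpa using hW1⟩, ?_⟩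
      rw [key W W⁻¹, inv_inv, Set.inter_self]
  have hb1 : (𝓝 ((g.1 : ι → Circle))).HasBasis
      (fun W : Set (ι → Circle) => IsOpen W ∧ (1 : ι → Circle) ∈ W)
      (fun W => (fun x => (g.1 : ι → Circle) * x) '' W) := by
    rw [← map_mul_left_nhds_one ((g.1 : ι → Circle))]
    exact ((nhds_basis_opens (1 : ι → Circle)).to_hasBasis
      (fun W hW => ⟨W, ⟨hW.2, hW.1⟩, le_refl _⟩)
      (fun W hW => ⟨W, ⟨hW.2, hW.1⟩, le_refl _⟩)).map _
  have key2 : ∀ W : Set (ι → Circle),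
      (Prod.fst ⁻¹' ((Subtype.val) ⁻¹' ((fun x => (g.1 : ι → Circle) * x) '' W))) ∩
        (Prod.snd ⁻¹' {g.2}) =
      (fun p => g * p) '' {p : ↥(SigmaSubgroup ι) × Multiplicative ℤ |
        p.2 = 1 ∧ (p.1 : ι → Circle) ∈ W} := by
    intro W
    ext x
    rw [Set.mem_inter_iff, Set.mem_preimage, Set.mem_preimage, mem_left_image,
      Set.mem_preimage, Set.mem_singleton_iff, mem_left_image, Set.mem_setOf_eq]
    simp only [Prod.fst_mul, Prod.snd_mul, Prod.fst_inv, Prod.snd_inv,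
      Subgroup.coe_mul, InvMemClass.coe_inv, inv_mul_eq_one]
    tauto
  have hbot : @nhds (Multiplicative ℤ) ⊥ g.2 = pure g.2 := by
    letI : TopologicalSpace (Multiplicative ℤ) := ⊥
    haveI : DiscreteTopology (Multiplicative ℤ) := ⟨rfl⟩
    rw [nhds_discrete]
  have hR : (@nhds _ (TopologicalSpace.induced
        (Prod.fst : ↥(SigmaSubgroup ι) × Multiplicative ℤ → ↥(SigmaSubgroup ι))
        inferInstance ⊓
      TopologicalSpace.induced
        (Prod.snd : ↥(SigmaSubgroup ι) × Multiplicative ℤ → Multiplicative ℤ)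
        (⊥ : TopologicalSpace (Multiplicative ℤ))) g).HasBasis
      (fun W : Set (ι → Circle) => IsOpen W ∧ (1 : ι → Circle) ∈ W)
      (fun W => (fun p => g * p) '' {p : ↥(SigmaSubgroup ι) × Multiplicative ℤ |
        p.2 = 1 ∧ (p.1 : ι → Circle) ∈ W}) := by
    have e1 : (@nhds _ (TopologicalSpace.induced
          (Prod.fst : ↥(SigmaSubgroup ι) × Multiplicative ℤ → ↥(SigmaSubgroup ι))
          inferInstance ⊓
        TopologicalSpace.induced
          (Prod.snd : ↥(SigmaSubgroup ι) × Multiplicative ℤ → Multiplicative ℤ)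
          (⊥ : TopologicalSpace (Multiplicative ℤ))) g) =
        Filter.comap Prod.fst (Filter.comap Subtype.val (𝓝 (g.1 : ι → Circle))) ⊓
          Filter.comap Prod.snd (pure g.2) := by
      rw [@_root_.nhds_inf _ (TopologicalSpace.induced
            (Prod.fst : ↥(SigmaSubgroup ι) × Multiplicative ℤ → ↥(SigmaSubgroup ι))
            inferInstance)
          (TopologicalSpace.induced
            (Prod.snd : ↥(SigmaSubgroup ι) × Multiplicative ℤ → Multiplicative ℤ)
            (⊥ : TopologicalSpace (Multiplicative ℤ))) g]
      rw [nhds_induced, nhds_induced,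
        @nhds_induced _ _ (⊥ : TopologicalSpace (Multiplicative ℤ))
          (Prod.snd : ↥(SigmaSubgroup ι) × Multiplicative ℤ → Multiplicative ℤ) g, hbot]
    rw [e1]
    refine (((hb1.comap _).comap _).inf ((Filter.hasBasis_pure g.2).comap _)).to_hasBasis ?_ ?_
    · rintro ⟨W, _⟩ ⟨hW, -⟩
      exact ⟨W, hW, (key2 W).ge⟩
    · intro W hW
      exact ⟨(W, PUnit.unit), ⟨hW, trivial⟩, (key2 W).le⟩
  exact hL.eq_of_same_basis hR
end

section
/- Let ι be an index set, let Σ be the subgroup of countably supported elements of 𝕋^ι, let c ∈ 𝕋^ι, and let U be an open neighborhood of the identity in 𝕋^ι. Then the closure of the set O_U = ⋃_{n∈ℕ} ((cⁿU ∩ Σ) × {n}) in the product space 𝕋^ι × ℤ (product topology on 𝕋^ι, discrete topology on ℤ) equals ⋃_{n∈ℕ} (cⁿ·cl(U)) × {n}, where cl(U) is the closure of U in 𝕋^ι. -/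
/-- For `c ∈ 𝕋^ι` and `U ⊆ 𝕋^ι`, the set `O_U = ⋃_{n ∈ ℕ} ((cⁿU ∩ Σ) × {n})`, regarded
as a subset of the ambient product `𝕋^ι × ℤ` (`ℕ` is identified with
`{0, 1, 2, …} ⊆ ℤ`). -/
def OSetAmbient {ι : Type*} (c : ι → Circle) (U : Set (ι → Circle)) :
    Set ((ι → Circle) × ℤ) :=
  {p | ∃ n : ℕ, p.2 = (n : ℤ) ∧ p.1 ∈ SigmaSubgroup ι ∧ ∃ u ∈ U, p.1 = c ^ n * u}

lemma dense_sigma (ι : Type u) :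
    Dense ((SigmaSubgroup ι : Subgroup (ι → Circle)) : Set (ι → Circle)) := by
  classical
  intro x
  rw [mem_closure_iff]
  intro V hV hxV
  obtain ⟨I, u, hu, hsub⟩ := isOpen_pi_iff.mp hV x hxV
  refine ⟨fun i => if i ∈ I then x i else 1, hsub ?_, ?_⟩
  · intro i hi
    have hi' : i ∈ I := hi
    simp [hi', (hu i hi').2]
  · show Set.Countable _
    refine Set.Countable.mono ?_ (I : Set ι).to_countable
    intro i hi
    simp only [Set.mem_setOf_eq] at hi
    by_contra h
    have : i ∈ I := by
      by_contra h'
      exact hi (by simp [h'])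
    exact h this

lemma closure_slice (ι : Type u) (c : ι → Circle) (U : Set (ι → Circle))
    (hU : IsOpen U) (n : ℕ) :
    closure {x : ι → Circle | x ∈ SigmaSubgroup ι ∧ ∃ u ∈ U, x = c ^ n * u} =
      {x | ∃ u ∈ closure U, x = c ^ n * u} := by
  have himg : {x : ι → Circle | ∃ u ∈ U, x = c ^ n * u} =
      (Homeomorph.mulLeft (c ^ n)) '' U := by
    ext x
    simp only [Set.mem_setOf_eq, Set.mem_image, Homeomorph.coe_mulLeft]
    constructor
    · rintro ⟨u, hu, rfl⟩; exact ⟨u, hu, rfl⟩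
    · rintro ⟨u, hu, rfl⟩; exact ⟨u, hu, rfl⟩
  have hset : {x : ι → Circle | x ∈ SigmaSubgroup ι ∧ ∃ u ∈ U, x = c ^ n * u} =
      ((Homeomorph.mulLeft (c ^ n)) '' U) ∩
        ((SigmaSubgroup ι : Subgroup (ι → Circle)) : Set (ι → Circle)) := by
    rw [← himg]; ext x; simp only [Set.mem_setOf_eq, Set.mem_inter_iff]; tauto
  have hopen : IsOpen ((Homeomorph.mulLeft (c ^ n)) '' U) :=
    (Homeomorph.mulLeft (c ^ n)).isOpenMap _ hU
  have key : closure (((Homeomorph.mulLeft (c ^ n)) '' U) ∩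
      ((SigmaSubgroup ι : Subgroup (ι → Circle)) : Set (ι → Circle))) =
      closure ((Homeomorph.mulLeft (c ^ n)) '' U) := by
    apply Set.Subset.antisymm
    · exact closure_mono Set.inter_subset_left
    · exact closure_minimal ((dense_sigma ι).open_subset_closure_inter hopen)
        isClosed_closure
  rw [hset, key, ← (Homeomorph.mulLeft (c ^ n)).image_closure]
  ext x
  simp only [Set.mem_image, Homeomorph.coe_mulLeft, Set.mem_setOf_eq]
  constructor
  · rintro ⟨u, hu, rfl⟩; exact ⟨u, hu, rfl⟩
  · rintro ⟨u, hu, rfl⟩; exact ⟨u, hu, rfl⟩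

/-- Main theorem. -/
theorem closure_of_OSet_in_ambient_product
    (ι : Type u) (c : ι → Circle) (U : Set (ι → Circle))
    (hU : IsOpen U) (h1U : (1 : ι → Circle) ∈ U) :
    @closure ((ι → Circle) × ℤ)
        (TopologicalSpace.induced (Prod.fst : (ι → Circle) × ℤ → ι → Circle)
            inferInstance ⊓
          TopologicalSpace.induced (Prod.snd : (ι → Circle) × ℤ → ℤ)
            (⊥ : TopologicalSpace ℤ))
        (OSetAmbient c U) =
      {p : (ι → Circle) × ℤ | ∃ n : ℕ, p.2 = (n : ℤ) ∧
        ∃ u ∈ closure U, p.1 = c ^ n * u} := by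
  have htop : (TopologicalSpace.induced (Prod.fst : (ι → Circle) × ℤ → ι → Circle)
        inferInstance ⊓
      TopologicalSpace.induced (Prod.snd : (ι → Circle) × ℤ → ℤ)
        (⊥ : TopologicalSpace ℤ)) =
      (instTopologicalSpaceProd : TopologicalSpace ((ι → Circle) × ℤ)) := by
    rw [DiscreteTopology.eq_bot (α := ℤ)]
    rfl
  rw [htop]
  set S : ℕ → Set (ι → Circle) :=
    fun n => {x | x ∈ SigmaSubgroup ι ∧ ∃ u ∈ U, x = c ^ n * u} with hS
  have hOS : OSetAmbient c U = ⋃ n : ℕ, (S n) ×ˢ ({(n : ℤ)} : Set ℤ) := by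
    ext p
    simp only [OSetAmbient, Set.mem_setOf_eq, Set.mem_iUnion, Set.mem_prod,
      Set.mem_singleton_iff, hS]
    tauto
  ext p
  constructor
  · intro hp
    have hClopen : IsOpen {q : (ι → Circle) × ℤ | q.2 = p.2} := by
      have : {q : (ι → Circle) × ℤ | q.2 = p.2} =
          (Prod.snd) ⁻¹' ({p.2} : Set ℤ) := rfl
      rw [this]
      exact (continuous_snd.isOpen_preimage _ (isOpen_discrete _))
    have hmem : p ∈ {q : (ι → Circle) × ℤ | q.2 = p.2} ∩ closure (OSetAmbient c U) :=
      ⟨rfl, hp⟩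
    have hsub := hClopen.inter_closure (t := OSetAmbient c U)
    have hp2 : p ∈ closure ({q : (ι → Circle) × ℤ | q.2 = p.2} ∩ OSetAmbient c U) :=
      hsub hmem
    -- the intersected set is nonempty, giving n
    have hne : ({q : (ι → Circle) × ℤ | q.2 = p.2} ∩ OSetAmbient c U).Nonempty := by
      by_contra h
      rw [Set.not_nonempty_iff_eq_empty] at h
      rw [h, closure_empty] at hp2
      exact hp2
    obtain ⟨q, hq2, hqO⟩ := hne
    obtain ⟨n, hqn, _⟩ := hqO
    have hpn : p.2 = (n : ℤ) := by rw [← hq2]; exact hqn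
    -- the intersected set equals S n ×ˢ {n}
    have heq : {q : (ι → Circle) × ℤ | q.2 = p.2} ∩ OSetAmbient c U =
        (S n) ×ˢ ({(n : ℤ)} : Set ℤ) := by
      ext r
      simp only [Set.mem_inter_iff, Set.mem_setOf_eq, OSetAmbient, Set.mem_prod,
        Set.mem_singleton_iff, hS]
      constructor
      · rintro ⟨hr2, m, hrm, hrS, u, hu, hru⟩
        have : (m : ℤ) = (n : ℤ) := by rw [← hrm, hr2, hpn]
        have hmn : m = n := Nat.cast_injective this
        subst hmn
        exact ⟨⟨hrS, u, hu, hru⟩, by rw [← hrm, hr2, hpn]⟩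
      · rintro ⟨⟨hrS, u, hu, hru⟩, hr2⟩
        exact ⟨by rw [hr2, hpn], n, hr2, hrS, u, hu, hru⟩
    rw [heq, closure_prod_eq] at hp2
    obtain ⟨hp1, _⟩ := hp2
    rw [closure_slice ι c U hU n] at hp1
    obtain ⟨u, hu, hpu⟩ := hp1
    exact ⟨n, hpn, u, hu, hpu⟩
  · rintro ⟨n, hpn, u, hu, hpu⟩
    have h1 : p.1 ∈ closure (S n) := by
      rw [hS, closure_slice ι c U hU n]
      exact ⟨u, hu, hpu⟩
    have h2 : p ∈ closure ((S n) ×ˢ ({(n : ℤ)} : Set ℤ)) := by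
      rw [closure_prod_eq]
      exact ⟨h1, by rw [closure_singleton]; exact hpn⟩
    refine closure_mono ?_ h2
    rw [hOS]
    exact Set.subset_iUnion (fun n => (S n) ×ˢ ({(n : ℤ)} : Set ℤ)) n
end

section
/- Let ι be an index set of cardinality ℵ₁ and let Σ be the subgroup of countably supported elements of 𝕋^ι, endowed with the subspace topology of the product topology. Then Σ is sequentially compact: every sequence of elements of Σ has a subsequence converging in Σ. -/
/-- Let `ι` have cardinality `ℵ₁` and let `Σ` be the subgroup of countably supported
elements of `𝕋^ι`, with the subspace topology of the product topology.  Then `Σ` is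
sequentially compact: every sequence in `Σ` has a subsequence converging in `Σ`. -/
theorem sigmaSubgroup_seq_compact
    (ι : Type u) (hι : Cardinal.mk ι = Cardinal.aleph 1)
    (x : ℕ → ↥(SigmaSubgroup ι)) :
    ∃ (a : ↥(SigmaSubgroup ι)) (φ : ℕ → ℕ), StrictMono φ ∧
      Filter.Tendsto (x ∘ φ) Filter.atTop (nhds a) := by
  classical
  -- the union of the supports
  set S : Set ι := ⋃ n, {i | (x n : ι → Circle) i ≠ 1} with hS_def
  have hS : S.Countable := Set.countable_iUnion fun n => (x n).2
  haveI : Countable ↥S := hS.to_subtype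
  -- restrict the sequence to `S`
  set y : ℕ → (↥S → Circle) := fun n i => (x n : ι → Circle) i with hy_def
  -- `↥S → Circle` is compact and first countable, hence sequentially compact
  obtain ⟨b, -, φ, hφ, hb⟩ :=
    IsCompact.tendsto_subseq (x := y) isCompact_univ (fun n => Set.mem_univ _)
  -- the candidate limit
  set A : ι → Circle := fun i => if h : i ∈ S then b ⟨i, h⟩ else 1 with hA_def
  have hA : A ∈ SigmaSubgroup ι := by
    refine hS.mono fun i hi => ?_
    by_contra h
    simp only [Set.mem_setOf_eq, not_not] at hi
    exact hi (by simp [hA_def, h])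
  refine ⟨⟨A, hA⟩, φ, hφ, ?_⟩
  rw [tendsto_subtype_rng]
  rw [tendsto_pi_nhds]
  intro i
  by_cases h : i ∈ S
  · have : A i = b ⟨i, h⟩ := by simp [hA_def, h]
    rw [show ((⟨A, hA⟩ : ↥(SigmaSubgroup ι)) : ι → Circle) i = b ⟨i, h⟩ from this]
    have := (tendsto_pi_nhds.1 hb) ⟨i, h⟩
    simpa [hy_def, Function.comp] using this
  · have hxn : ∀ n, (x n : ι → Circle) i = 1 := by
      intro n
      by_contra hne
      exact h (Set.mem_iUnion.2 ⟨n, hne⟩)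
    have hAi : A i = 1 := by simp [hA_def, h]
    simpa [Function.comp, hxn, hAi] using tendsto_const_nhds (α := ℕ) (f := Filter.atTop)
      (a := (1 : Circle))
end

section
/- The group coreflection of the Sorgenfrey line is the discrete group of the reals: if τ denotes the Sorgenfrey (lower limit) topology on the additive group ℝ, then the smallest topology containing τ together with the sets −U = {−x : x ∈ U} for all τ-open sets U is the discrete topology on ℝ. -/
/-- The group coreflection of the Sorgenfrey line is the discrete group of reals: if `τ` is
the Sorgenfrey (lower limit) topology on `ℝ`, generated by the half-open intervals
`[a, b)` with `a < b`, then the smallest topology containing `τ` together with the sets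
`-U` for all `τ`-open `U` (i.e. the topology generated by the union of `τ` and the
pullback of `τ` under negation, which in Mathlib's order on topologies is the infimum
`τ ⊓ induced (-·) τ`) is the discrete topology (`⊥` in Mathlib's order) on `ℝ`. -/
theorem sorgenfrey_group_coreflection_discrete
    (τ : TopologicalSpace ℝ)
    (hτ : τ = TopologicalSpace.generateFrom
      {s : Set ℝ | ∃ a b : ℝ, a < b ∧ s = Set.Ico a b}) :
    τ ⊓ TopologicalSpace.induced (fun x : ℝ => -x) τ = ⊥ := by
  open Topology in
  refine eq_bot_of_singletons_open fun x => ?_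
  have key : ({x} : Set ℝ) =
      Set.Ico x (x + 1) ∩ ((fun y : ℝ => -y) ⁻¹' Set.Ico (-x) (-x + 1)) := by
    ext y
    simp only [Set.mem_singleton_iff, Set.mem_inter_iff, Set.mem_preimage, Set.mem_Ico]
    constructor
    · rintro rfl; constructor <;> constructor <;> linarith
    · rintro ⟨⟨h1, _⟩, ⟨h3, _⟩⟩; linarith
  rw [key]
  have h1 : @IsOpen ℝ τ (Set.Ico x (x + 1)) := by
    rw [hτ]; exact TopologicalSpace.GenerateOpen.basic _ ⟨x, x + 1, by linarith, rfl⟩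
  have h2 : @IsOpen ℝ τ (Set.Ico (-x) (-x + 1)) := by
    rw [hτ]; exact TopologicalSpace.GenerateOpen.basic _ ⟨-x, -x + 1, by linarith, rfl⟩
  have h2' : @IsOpen ℝ (TopologicalSpace.induced (fun y : ℝ => -y) τ)
      ((fun y : ℝ => -y) ⁻¹' Set.Ico (-x) (-x + 1)) := ⟨_, h2, rfl⟩
  exact @IsOpen.inter ℝ (τ ⊓ TopologicalSpace.induced (fun y : ℝ => -y) τ) _ _
    (h1.mono inf_le_left) (h2'.mono inf_le_right)
end
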